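/- Gyration preserves refined link-pattern data: let (𝒢,τ,Γ) be a valid triplet and φ ∈ Fpl(𝒢,τ). Then H_Γ(φ) ∈ Fpl(𝒢,τ̄), and π_b(H_Γ(φ)) = π_b(φ), π_w(H_Γ(φ)) = π_w(φ), and ℓ(H_Γ(φ)) = ℓ(φ). Moreover H_Γ ∘ H_Γ is the identity, so H_Γ is a bijection from Fpl(𝒢,τ) onto Fpl(𝒢,τ̄). -/

import Mathlib

open scoped Classical

/-! ### Abstract graphs, cycle partitions and the map `H_Γ`. -/

/-- A closed cycle in the graph with edge-endpoint map `ends : E → Sym2 V`: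
edge `i` joins the vertices `i` and `i+1`. -/
structure CycleIn (V E : Type) (ends : E → Sym2 V) where
  len : ℕ
  lenPos : 0 < len
  edge : ZMod len → E
  vtx : ZMod len → V
  edgeInj : Function.Injective edge
  vtxInj : Function.Injective vtx
  ends_eq : ∀ i, ends (edge i) = s(vtx i, vtx (i + 1))

/-- Number of endpoints of the edge `e` equal to `v` (2 for a loop at `v`). -/
noncomputable def incG {V E : Type} (ends : E → Sym2 V) (e : E) (v : V) : ℕ :=
  if ends e = s(v, v) then 2 else if v ∈ ends e then 1 else 0

/-- Degree of a vertex. -/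
noncomputable def degG {V E : Type} [Fintype E] (ends : E → Sym2 V) (v : V) : ℕ :=
  ∑ e : E, incG ends e v

/-- Black degree of a vertex in a configuration `φ`. -/
noncomputable def bdegG {V E : Type} [Fintype E] (ends : E → Sym2 V)
    (φ : E → Bool) (v : V) : ℕ :=
  ∑ e : E, if φ e then incG ends e v else 0

/-- FPL on the abstract graph with boundary condition `τ`: `φ` agrees with `τ` on the
edges incident to degree-2 vertices, and every degree-4 vertex has two black edges. -/
def IsFplG {V E : Type} [Fintype E] (ends : E → Sym2 V) (τ : E → Bool)
    (φ : E → Bool) : Prop :=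
  (∀ e (v : V), v ∈ ends e → degG ends v = 2 → φ e = τ e) ∧
    ∀ v, degG ends v = 4 → bdegG ends φ v = 2

/-- `V''(τ)`: degree-2 vertices incident to one black and one white edge. -/
def Vpp {V E : Type} [Fintype E] (ends : E → Sym2 V) (τ : E → Bool) (v : V) : Prop :=
  degG ends v = 2 ∧ bdegG ends τ v = 1

/-- Connectivity of vertices through edges of colour `b`. -/
def VConn {V E : Type} (ends : E → Sym2 V) (φ : E → Bool) (b : Bool) : V → V → Prop :=
  Relation.ReflTransGen fun u w => ∃ e, φ e = b ∧ u ∈ ends e ∧ w ∈ ends e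

def ActiveV {V E : Type} (ends : E → Sym2 V) (φ : E → Bool) (b : Bool) (v : V) : Prop :=
  ∃ e, φ e = b ∧ v ∈ ends e

/-- The number of closed monochromatic cycles of colour `b`: components of the
`b`-coloured subgraph containing no vertex of `V''(τ)`. -/
noncomputable def cycCount {V E : Type} [Fintype E] (ends : E → Sym2 V) (τ : E → Bool)
    (φ : E → Bool) (b : Bool) : ℕ :=
  Set.ncard {C : Set V |
    (∃ v, ActiveV ends φ b v ∧ C = {w | VConn ends φ b v w ∧ ActiveV ends φ b w}) ∧
    ∀ w ∈ C, ¬ Vpp ends τ w}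

/-- `Γ` is a partition of the edge set into edge-disjoint closed cycles. -/
def IsCyclePartition {V E : Type} (ends : E → Sym2 V) (Γ : E → CycleIn V E ends) : Prop :=
  (∀ e, ∃ i, (Γ e).edge i = e) ∧ ∀ e e', (∃ i, (Γ e).edge i = e') → Γ e' = Γ e

/-- Valid triplet: a cycle partition, all cycles of length at most 4, and cycles
through `V''(τ)` of length at most 3. -/
def ValidTriplet {V E : Type} [Fintype E] (ends : E → Sym2 V) (τ : E → Bool)
    (Γ : E → CycleIn V E ends) : Prop :=
  IsCyclePartition ends Γ ∧ (∀ e, (Γ e).len ≤ 4) ∧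
    ∀ e, (∃ i, Vpp ends τ ((Γ e).vtx i)) → (Γ e).len ≤ 3

/-- The gyration map `H_Γ`: complement the colours on every cell, except on the
length-4 cells whose colours alternate cyclically, which are left unchanged. -/
noncomputable def HG {V E : Type} (ends : E → Sym2 V) (Γ : E → CycleIn V E ends)
    (φ : E → Bool) : E → Bool := fun e =>
  if (Γ e).len = 4 ∧ ∀ i, φ ((Γ e).edge i) ≠ φ ((Γ e).edge (i + 1)) then φ e
  else !(φ e)



/-! ### Auxiliary development -/

namespace Gyr
set_option linter.unusedSectionVars false

variable {V E : Type} [Fintype V] [Fintype E] {ends : E → Sym2 V}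

/-- Sum of a function over the edges of a cell. -/
noncomputable def cellSum (γ : CycleIn V E ends) (g : E → ℕ) : ℕ :=
  letI : NeZero γ.len := ⟨γ.lenPos.ne'⟩
  ∑ i : ZMod γ.len, g (γ.edge i)

noncomputable def bdeg' (ends : E → Sym2 V) (ψ : E → Bool) (b : Bool) (v : V) : ℕ :=
  ∑ e : E, if ψ e = b then incG ends e v else 0

lemma bdegG_eq_bdeg' (ψ : E → Bool) (v : V) :
    bdegG ends ψ v = bdeg' ends ψ true v := by
  unfold bdegG bdeg'
  refine Finset.sum_congr rfl fun e _ => ?_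
  by_cases h : ψ e <;> simp [h]

lemma bdeg'_add_bdeg' (ψ : E → Bool) (v : V) :
    bdeg' ends ψ true v + bdeg' ends ψ false v = degG ends v := by
  unfold bdeg' degG
  rw [← Finset.sum_add_distrib]
  refine Finset.sum_congr rfl fun e _ => ?_
  by_cases h : ψ e <;> simp [h]

lemma incG_eq_zero {e : E} {v : V} (h : v ∉ ends e) : incG ends e v = 0 := by
  unfold incG
  rw [if_neg, if_neg h]
  rintro he; exact h (he ▸ Sym2.mem_mk_left v v)

lemma incG_pos {e : E} {v : V} (h : v ∈ ends e) : 1 ≤ incG ends e v := by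
  unfold incG
  split
  · omega
  · simp [h]

/-- vertices of a cell seen through `ends`. -/
lemma mem_ends_iff (γ : CycleIn V E ends) (i : ZMod γ.len) {v : V} :
    v ∈ ends (γ.edge i) ↔ v = γ.vtx i ∨ v = γ.vtx (i + 1) := by
  rw [γ.ends_eq i, Sym2.mem_iff]

lemma vtx_mem_ends (γ : CycleIn V E ends) (i : ZMod γ.len) :
    γ.vtx i ∈ ends (γ.edge i) := (mem_ends_iff γ i).2 (Or.inl rfl)

lemma vtx_succ_mem_ends (γ : CycleIn V E ends) (i : ZMod γ.len) :
    γ.vtx (i + 1) ∈ ends (γ.edge i) := (mem_ends_iff γ i).2 (Or.inr rfl)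

section cellwise

variable {Γ : E → CycleIn V E ends}

lemma cell_edge_cellOf (hpart : IsCyclePartition ends Γ) (e : E) (i : ZMod (Γ e).len) :
    Γ ((Γ e).edge i) = Γ e := hpart.2 e _ ⟨i, rfl⟩

lemma mem_cell_of_mem_ends (hpart : IsCyclePartition ends Γ) {e : E} {v : V}
    (h : v ∈ ends e) : ∃ j, v = (Γ e).vtx j := by
  obtain ⟨i, hi⟩ := hpart.1 e
  rw [← hi, mem_ends_iff] at h
  rcases h with h | h
  · exact ⟨i, h⟩
  · exact ⟨i + 1, h⟩

/-- fibers of Γ are exactly cell edge sets -/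
lemma fiber_eq (hpart : IsCyclePartition ends Γ) (e e' : E) :
    Γ e' = Γ e ↔ ∃ i, (Γ e).edge i = e' := by
  constructor
  · intro h
    obtain ⟨i, hi⟩ := hpart.1 e'
    exact h ▸ ⟨i, hi⟩
  · intro h
    exact hpart.2 e e' h

lemma sum_fiber (hpart : IsCyclePartition ends Γ) (e : E) (g : E → ℕ) :
    ∑ e' ∈ Finset.univ.filter (fun e' => Γ e' = Γ e), g e' = cellSum (Γ e) g := by
  classical
  unfold cellSum
  letI : NeZero (Γ e).len := ⟨(Γ e).lenPos.ne'⟩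
  have hset : Finset.univ.filter (fun e' => Γ e' = Γ e)
      = Finset.univ.image (Γ e).edge := by
    ext e'
    simp only [Finset.mem_filter, Finset.mem_univ, true_and, Finset.mem_image]
    rw [fiber_eq hpart]
  rw [hset, Finset.sum_image (fun i _ j _ h => (Γ e).edgeInj h)]

end cellwise

end Gyr

namespace Gyr
set_option linter.unusedSectionVars false
variable {V E : Type} [Fintype V] [Fintype E] {ends : E → Sym2 V}

noncomputable def cellDeg (γ : CycleIn V E ends) (v : V) : ℕ :=
  cellSum γ (fun e' => incG ends e' v)

noncomputable def bcc (γ : CycleIn V E ends) (ψ : E → Bool) (b : Bool) (v : V) : ℕ :=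
  cellSum γ (fun e' => if ψ e' = b then incG ends e' v else 0)

def halfOf (γ : CycleIn V E ends) (ψ : E → Bool) (v : V) : Prop :=
  ∃ j, v = γ.vtx j ∧ ψ (γ.edge (j - 1)) ≠ ψ (γ.edge j)

lemma one_ne_zero_zmod (γ : CycleIn V E ends) (h2 : 2 ≤ γ.len) :
    (1 : ZMod γ.len) ≠ 0 := by
  haveI : NeZero γ.len := ⟨γ.lenPos.ne'⟩
  intro h
  have hdvd : γ.len ∣ 1 := by
    have := (ZMod.natCast_eq_zero_iff 1 γ.len).1 (by push_cast; exact h)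
    exact this
  have := Nat.le_of_dvd one_pos hdvd
  omega

lemma succ_ne_self (γ : CycleIn V E ends) (h2 : 2 ≤ γ.len) (i : ZMod γ.len) :
    i + 1 ≠ i := by
  intro h
  have : (1 : ZMod γ.len) = 0 := by
    have := congrArg (fun x => x - i) h
    simpa [add_comm, add_sub_cancel_right] using this
  exact one_ne_zero_zmod γ h2 this

lemma vtx_succ_ne (γ : CycleIn V E ends) (h2 : 2 ≤ γ.len) (i : ZMod γ.len) :
    γ.vtx (i + 1) ≠ γ.vtx i := fun h => succ_ne_self γ h2 i (γ.vtxInj h)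

lemma incG_edge_self (γ : CycleIn V E ends) (h2 : 2 ≤ γ.len) (i : ZMod γ.len) :
    incG ends (γ.edge i) (γ.vtx i) = 1 := by
  unfold incG
  rw [γ.ends_eq i, if_neg, if_pos (Sym2.mem_mk_left _ _)]
  rw [Sym2.eq_iff]
  rintro (⟨h1, h2'⟩ | ⟨h1, h2'⟩) <;> exact vtx_succ_ne γ h2 i h2'

lemma incG_edge_succ (γ : CycleIn V E ends) (h2 : 2 ≤ γ.len) (i : ZMod γ.len) :
    incG ends (γ.edge i) (γ.vtx (i + 1)) = 1 := by
  unfold incG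
  rw [γ.ends_eq i, if_neg, if_pos (Sym2.mem_mk_right _ _)]
  rw [Sym2.eq_iff]
  rintro (⟨h1, h2'⟩ | ⟨h1, h2'⟩) <;> exact vtx_succ_ne γ h2 i h1.symm

/-- The two cell edges at a vertex, `len ≥ 2` case. -/
lemma cellSum_vtx (γ : CycleIn V E ends) (h2 : 2 ≤ γ.len) (j : ZMod γ.len) (g : E → ℕ)
    (hg : ∀ i, γ.vtx j ∉ ends (γ.edge i) → g (γ.edge i) = 0) :
    cellSum γ g = g (γ.edge (j - 1)) + g (γ.edge j) := by
  classical
  unfold cellSum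
  letI : NeZero γ.len := ⟨γ.lenPos.ne'⟩
  have hne : (j - 1 : ZMod γ.len) ≠ j := by
    intro h
    exact one_ne_zero_zmod γ h2 (by
      have := congrArg (fun x => j - x) h
      simpa [sub_sub_cancel] using this)
  have hzero : ∀ i ∈ (Finset.univ : Finset (ZMod γ.len)),
      i ∉ ({j - 1, j} : Finset (ZMod γ.len)) → g (γ.edge i) = 0 := by
    intro i _ hi
    simp only [Finset.mem_insert, Finset.mem_singleton] at hi
    push_neg at hi
    refine hg i fun hmem => ?_
    rw [mem_ends_iff] at hmem
    rcases hmem with h | h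
    · exact hi.2 (γ.vtxInj h).symm
    · refine hi.1 ?_
      have hji : j = i + 1 := γ.vtxInj h
      rw [hji]; ring
  have hsub : (∑ i : ZMod γ.len, g (γ.edge i))
      = ∑ i ∈ ({j - 1, j} : Finset (ZMod γ.len)), g (γ.edge i) :=
    (Finset.sum_subset (Finset.subset_univ _) hzero).symm
  rw [hsub, Finset.sum_pair hne]

lemma subsingleton_zmod_one (γ : CycleIn V E ends) (h1 : γ.len = 1) :
    ∀ i j : ZMod γ.len, i = j := by
  have : Subsingleton (ZMod γ.len) := by rw [h1]; infer_instance
  exact fun i j => Subsingleton.elim i j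

lemma cellSum_len_one (γ : CycleIn V E ends) (h1 : γ.len = 1) (j : ZMod γ.len)
    (g : E → ℕ) : cellSum γ g = g (γ.edge j) := by
  unfold cellSum
  letI : NeZero γ.len := ⟨γ.lenPos.ne'⟩
  have hss := subsingleton_zmod_one γ h1
  calc (∑ i : ZMod γ.len, g (γ.edge i)) = ∑ _i : ZMod γ.len, g (γ.edge j) :=
        Finset.sum_congr rfl (fun i _ => by rw [hss i j])
    _ = g (γ.edge j) := by
      rw [Finset.sum_const, Finset.card_univ, ZMod.card, h1, one_smul]

lemma incG_loop (γ : CycleIn V E ends) (h1 : γ.len = 1) (j : ZMod γ.len) :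
    incG ends (γ.edge j) (γ.vtx j) = 2 := by
  unfold incG
  rw [γ.ends_eq j, if_pos]
  rw [subsingleton_zmod_one γ h1 (j+1) j]

lemma len_cases (γ : CycleIn V E ends) : γ.len = 1 ∨ 2 ≤ γ.len := by
  have := γ.lenPos; omega

lemma cellDeg_vtx (γ : CycleIn V E ends) (j : ZMod γ.len) :
    cellDeg γ (γ.vtx j) = 2 := by
  rcases len_cases γ with h1 | h2
  · rw [cellDeg, cellSum_len_one γ h1 j (fun e' => incG ends e' (γ.vtx j)),
      incG_loop γ h1 j]
  · rw [cellDeg, cellSum_vtx γ h2 j (fun e' => incG ends e' (γ.vtx j))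
      (fun i hi => incG_eq_zero hi), incG_edge_self γ h2 j]
    have : γ.vtx j = γ.vtx ((j - 1) + 1) := by rw [sub_add_cancel]
    rw [this, incG_edge_succ γ h2 (j-1)]

lemma cellDeg_zero (γ : CycleIn V E ends) {v : V} (hv : ∀ j, v ≠ γ.vtx j) :
    cellDeg γ v = 0 := by
  unfold cellDeg cellSum
  letI : NeZero γ.len := ⟨γ.lenPos.ne'⟩
  refine Finset.sum_eq_zero fun i _ => incG_eq_zero fun h => ?_
  rw [mem_ends_iff] at h
  rcases h with h | h
  · exact hv i h
  · exact hv (i+1) h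

lemma bcc_add_bcc (γ : CycleIn V E ends) (ψ : E → Bool) (v : V) :
    bcc γ ψ true v + bcc γ ψ false v = cellDeg γ v := by
  unfold bcc cellDeg cellSum
  letI : NeZero γ.len := ⟨γ.lenPos.ne'⟩
  rw [← Finset.sum_add_distrib]
  refine Finset.sum_congr rfl fun i _ => ?_
  by_cases h : ψ (γ.edge i) <;> simp [h]

lemma bcc_le_cellDeg (γ : CycleIn V E ends) (ψ : E → Bool) (b : Bool) (v : V) :
    bcc γ ψ b v ≤ cellDeg γ v := by
  unfold bcc cellDeg cellSum
  letI : NeZero γ.len := ⟨γ.lenPos.ne'⟩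
  refine Finset.sum_le_sum fun i _ => ?_
  show (if ψ (γ.edge i) = b then incG ends (γ.edge i) v else 0) ≤ incG ends (γ.edge i) v
  by_cases h : ψ (γ.edge i) = b
  · rw [if_pos h]
  · rw [if_neg h]; exact Nat.zero_le _

lemma bcc_pos (γ : CycleIn V E ends) {ψ : E → Bool} {b : Bool} {v : V} {i : ZMod γ.len}
    (hc : ψ (γ.edge i) = b) (hv : v ∈ ends (γ.edge i)) : 1 ≤ bcc γ ψ b v := by
  unfold bcc cellSum
  letI : NeZero γ.len := ⟨γ.lenPos.ne'⟩
  have h1 : 1 ≤ (fun e' => if ψ e' = b then incG ends e' v else 0) (γ.edge i) := by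
    show 1 ≤ if ψ (γ.edge i) = b then incG ends (γ.edge i) v else 0
    rw [if_pos hc]; exact incG_pos hv
  exact le_trans h1 (Finset.single_le_sum
    (f := fun k => (fun e' => if ψ e' = b then incG ends e' v else 0) (γ.edge k))
    (fun _ _ => Nat.zero_le _) (Finset.mem_univ i))

lemma exists_edge_of_bcc_pos (γ : CycleIn V E ends) {ψ : E → Bool} {b : Bool} {v : V}
    (h : 1 ≤ bcc γ ψ b v) : ∃ i, ψ (γ.edge i) = b ∧ v ∈ ends (γ.edge i) := by
  by_contra hc
  push_neg at hc
  have : bcc γ ψ b v = 0 := by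
    unfold bcc cellSum
    letI : NeZero γ.len := ⟨γ.lenPos.ne'⟩
    refine Finset.sum_eq_zero fun i _ => ?_
    show (if ψ (γ.edge i) = b then incG ends (γ.edge i) v else 0) = 0
    by_cases hψ : ψ (γ.edge i) = b
    · rw [if_pos hψ]; exact incG_eq_zero (hc i hψ)
    · rw [if_neg hψ]
  omega

lemma bcc_vtx (γ : CycleIn V E ends) (h2 : 2 ≤ γ.len) (ψ : E → Bool) (b : Bool)
    (j : ZMod γ.len) :
    bcc γ ψ b (γ.vtx j) = (if ψ (γ.edge (j-1)) = b then 1 else 0)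
      + (if ψ (γ.edge j) = b then 1 else 0) := by
  rw [bcc, cellSum_vtx γ h2 j (fun e' => if ψ e' = b then incG ends e' (γ.vtx j) else 0)
    (fun i hi => by
      show (if ψ (γ.edge i) = b then incG ends (γ.edge i) (γ.vtx j) else 0) = 0
      rw [incG_eq_zero hi, ite_self])]
  congr 1
  · by_cases h : ψ (γ.edge (j-1)) = b
    · rw [if_pos h, if_pos h]
      have : γ.vtx j = γ.vtx ((j - 1) + 1) := by rw [sub_add_cancel]
      rw [this, incG_edge_succ γ h2 (j-1)]
    · rw [if_neg h, if_neg h]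
  · by_cases h : ψ (γ.edge j) = b
    · rw [if_pos h, if_pos h, incG_edge_self γ h2 j]
    · rw [if_neg h, if_neg h]

lemma bcc_one_iff (γ : CycleIn V E ends) (ψ : E → Bool) (b : Bool) (j : ZMod γ.len) :
    bcc γ ψ b (γ.vtx j) = 1 ↔ ψ (γ.edge (j-1)) ≠ ψ (γ.edge j) := by
  rcases len_cases γ with h1 | h2
  · rw [bcc, cellSum_len_one γ h1 j
      (fun e' => if ψ e' = b then incG ends e' (γ.vtx j) else 0)]
    rw [subsingleton_zmod_one γ h1 (j-1) j]
    constructor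
    · intro h
      by_cases hψ : ψ (γ.edge j) = b
      · rw [if_pos hψ, incG_loop γ h1 j] at h; omega
      · rw [if_neg hψ] at h; omega
    · intro h; exact absurd rfl h
  · rw [bcc_vtx γ h2 ψ b j]
    rcases Bool.eq_false_or_eq_true (ψ (γ.edge (j-1))) with h | h <;>
      rcases Bool.eq_false_or_eq_true (ψ (γ.edge j)) with h' | h' <;>
      rcases Bool.eq_false_or_eq_true b with hb | hb <;>
      simp [h, h', hb]

lemma bcc_two_iff (γ : CycleIn V E ends) (ψ : E → Bool) (b : Bool) (j : ZMod γ.len) :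
    bcc γ ψ b (γ.vtx j) = 2 ↔ ψ (γ.edge (j-1)) = b ∧ ψ (γ.edge j) = b := by
  rcases len_cases γ with h1 | h2
  · rw [bcc, cellSum_len_one γ h1 j
      (fun e' => if ψ e' = b then incG ends e' (γ.vtx j) else 0)]
    rw [subsingleton_zmod_one γ h1 (j-1) j]
    by_cases hψ : ψ (γ.edge j) = b
    · rw [if_pos hψ, incG_loop γ h1 j]; simp [hψ]
    · rw [if_neg hψ]; simp [hψ]
  · rw [bcc_vtx γ h2 ψ b j]
    by_cases h : ψ (γ.edge (j-1)) = b <;> by_cases h' : ψ (γ.edge j) = b <;>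
      simp [h, h']

lemma halfOf_iff_bcc_one (γ : CycleIn V E ends) (ψ : E → Bool) (b : Bool)
    (j : ZMod γ.len) : halfOf γ ψ (γ.vtx j) ↔ bcc γ ψ b (γ.vtx j) = 1 := by
  rw [bcc_one_iff γ ψ b j]
  constructor
  · rintro ⟨j', hj', hne⟩
    rwa [γ.vtxInj hj']
  · intro h; exact ⟨j, rfl, h⟩

end Gyr

namespace Gyr
set_option linter.unusedSectionVars false
variable {V E : Type} [Fintype V] [Fintype E] {ends : E → Sym2 V}
  {Γ : E → CycleIn V E ends}

lemma sum_cells (hpart : IsCyclePartition ends Γ) (g : E → ℕ) :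
    ∑ e : E, g e = ∑ γ ∈ Finset.univ.image Γ, cellSum γ g := by
  classical
  rw [← Finset.sum_fiberwise_of_maps_to
    (fun e _ => Finset.mem_image_of_mem Γ (Finset.mem_univ e)) g]
  refine Finset.sum_congr rfl fun γ hγ => ?_
  obtain ⟨e₀, _, he₀⟩ := Finset.mem_image.1 hγ
  subst he₀
  exact sum_fiber hpart e₀ g

lemma degG_eq_sum (hpart : IsCyclePartition ends Γ) (v : V) :
    degG ends v = ∑ γ ∈ Finset.univ.image Γ, cellDeg γ v :=
  sum_cells hpart _

lemma bdeg'_eq_sum (hpart : IsCyclePartition ends Γ) (ψ : E → Bool) (b : Bool) (v : V) :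
    bdeg' ends ψ b v = ∑ γ ∈ Finset.univ.image Γ, bcc γ ψ b v :=
  sum_cells hpart _

/-- number of cells containing `v`. -/
lemma degG_eq_card (hpart : IsCyclePartition ends Γ) (v : V) :
    degG ends v = 2 * ((Finset.univ.image Γ).filter (fun γ => ∃ j, v = γ.vtx j)).card := by
  classical
  rw [degG_eq_sum hpart v]
  rw [← Finset.sum_filter_add_sum_filter_not (Finset.univ.image Γ)
    (fun γ => ∃ j, v = γ.vtx j) (fun γ => cellDeg γ v)]
  have h1 : ∑ γ ∈ (Finset.univ.image Γ).filter (fun γ => ∃ j, v = γ.vtx j),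
      cellDeg γ v = ∑ γ ∈ (Finset.univ.image Γ).filter (fun γ => ∃ j, v = γ.vtx j), 2 := by
    refine Finset.sum_congr rfl fun γ hγ => ?_
    obtain ⟨j, hj⟩ := (Finset.mem_filter.1 hγ).2
    rw [hj, cellDeg_vtx]
  have h2 : ∑ γ ∈ (Finset.univ.image Γ).filter (fun γ => ¬ ∃ j, v = γ.vtx j),
      cellDeg γ v = 0 := by
    refine Finset.sum_eq_zero fun γ hγ => ?_
    have := (Finset.mem_filter.1 hγ).2
    push_neg at this
    exact cellDeg_zero γ this
  rw [h1, h2, Finset.sum_const, add_zero, smul_eq_mul, mul_comm]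

lemma exists_incident_of_mem_cell (hpart : IsCyclePartition ends Γ)
    {γ : CycleIn V E ends} (hγ : γ ∈ Finset.univ.image Γ) {v : V} {j : ZMod γ.len}
    (hj : v = γ.vtx j) : ∃ e, v ∈ ends e ∧ Γ e = γ := by
  classical
  obtain ⟨e₀, _, he₀⟩ := Finset.mem_image.1 hγ
  refine ⟨γ.edge j, hj ▸ vtx_mem_ends γ j, ?_⟩
  subst he₀
  exact cell_edge_cellOf hpart e₀ j

lemma mem_filter_of_incident (hpart : IsCyclePartition ends Γ) {v : V} {e : E}
    (he : v ∈ ends e) :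
    Γ e ∈ (Finset.univ.image Γ).filter (fun γ => ∃ j, v = γ.vtx j) := by
  classical
  exact Finset.mem_filter.2 ⟨Finset.mem_image_of_mem Γ (Finset.mem_univ e),
    mem_cell_of_mem_ends hpart he⟩

/-- D1: at a degree-2 vertex all incident edges lie in the same cell. -/
lemma deg_two_unique_cell (hpart : IsCyclePartition ends Γ) {v : V}
    (hv : degG ends v = 2) {e e' : E} (he : v ∈ ends e) (he' : v ∈ ends e') :
    Γ e' = Γ e := by
  classical
  have hcard : ((Finset.univ.image Γ).filter (fun γ => ∃ j, v = γ.vtx j)).card = 1 := by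
    have := degG_eq_card hpart v; omega
  obtain ⟨γ₀, hγ₀⟩ := Finset.card_eq_one.1 hcard
  have h1 := mem_filter_of_incident hpart he
  have h2 := mem_filter_of_incident hpart he'
  rw [hγ₀, Finset.mem_singleton] at h1 h2
  rw [h1, h2]

lemma bcc_eq_zero_of_not_mem (γ : CycleIn V E ends) (ψ : E → Bool) (b : Bool) {v : V}
    (hv : ∀ j, v ≠ γ.vtx j) : bcc γ ψ b v = 0 := by
  have := bcc_le_cellDeg γ ψ b v
  rw [cellDeg_zero γ hv] at this
  omega

/-- D3 -/
lemma bdeg'_deg_two (hpart : IsCyclePartition ends Γ) {v : V}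
    (hv : degG ends v = 2) {e : E} (he : v ∈ ends e) (ψ : E → Bool) (b : Bool) :
    bdeg' ends ψ b v = bcc (Γ e) ψ b v := by
  classical
  rw [bdeg'_eq_sum hpart ψ b v]
  refine Finset.sum_eq_single_of_mem (Γ e)
    (Finset.mem_image_of_mem Γ (Finset.mem_univ e)) (fun γ hγ hne => ?_)
  refine bcc_eq_zero_of_not_mem γ ψ b (fun j hj => hne ?_)
  obtain ⟨e', he', hΓe'⟩ := exists_incident_of_mem_cell hpart hγ hj
  rw [← hΓe', deg_two_unique_cell hpart hv he he']

/-- the two cells at a degree-4 vertex. -/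
lemma deg_four_cells (hpart : IsCyclePartition ends Γ) {v : V}
    (hv : degG ends v = 4) :
    ∃ e e', v ∈ ends e ∧ v ∈ ends e' ∧ Γ e ≠ Γ e' := by
  classical
  have hcard : ((Finset.univ.image Γ).filter (fun γ => ∃ j, v = γ.vtx j)).card = 2 := by
    have := degG_eq_card hpart v; omega
  obtain ⟨γ₁, γ₂, hne, hpair⟩ := Finset.card_eq_two.1 hcard
  have h1 : γ₁ ∈ (Finset.univ.image Γ).filter (fun γ => ∃ j, v = γ.vtx j) := by
    rw [hpair]; simp
  have h2 : γ₂ ∈ (Finset.univ.image Γ).filter (fun γ => ∃ j, v = γ.vtx j) := by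
    rw [hpair]; simp
  obtain ⟨j₁, hj₁⟩ := (Finset.mem_filter.1 h1).2
  obtain ⟨j₂, hj₂⟩ := (Finset.mem_filter.1 h2).2
  obtain ⟨e, he, hΓe⟩ := exists_incident_of_mem_cell hpart (Finset.mem_filter.1 h1).1 hj₁
  obtain ⟨e', he', hΓe'⟩ := exists_incident_of_mem_cell hpart (Finset.mem_filter.1 h2).1 hj₂
  exact ⟨e, e', he, he', by rw [hΓe, hΓe']; exact hne⟩

/-- D2 -/
lemma bdeg'_deg_four (hpart : IsCyclePartition ends Γ) {v : V}
    (hv : degG ends v = 4) {e e' : E} (he : v ∈ ends e) (he' : v ∈ ends e')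
    (hne : Γ e ≠ Γ e') (ψ : E → Bool) (b : Bool) :
    bdeg' ends ψ b v = bcc (Γ e) ψ b v + bcc (Γ e') ψ b v := by
  classical
  have hcard : ((Finset.univ.image Γ).filter (fun γ => ∃ j, v = γ.vtx j)).card = 2 := by
    have := degG_eq_card hpart v; omega
  have hsubs : ({Γ e, Γ e'} : Finset (CycleIn V E ends)) ⊆
      (Finset.univ.image Γ).filter (fun γ => ∃ j, v = γ.vtx j) := by
    intro γ hγ
    rw [Finset.mem_insert, Finset.mem_singleton] at hγ
    rcases hγ with h | h <;> subst h
    · exact mem_filter_of_incident hpart he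
    · exact mem_filter_of_incident hpart he'
  have hpair : ({Γ e, Γ e'} : Finset (CycleIn V E ends)) =
      (Finset.univ.image Γ).filter (fun γ => ∃ j, v = γ.vtx j) :=
    Finset.eq_of_subset_of_card_le hsubs (by rw [Finset.card_pair hne]; omega)
  rw [bdeg'_eq_sum hpart ψ b v]
  have hz : ∀ γ ∈ Finset.univ.image Γ,
      γ ∉ ((Finset.univ.image Γ).filter (fun γ => ∃ j, v = γ.vtx j)) →
      bcc γ ψ b v = 0 := by
    intro γ hγ hγ'
    refine bcc_eq_zero_of_not_mem γ ψ b (fun j hj => hγ' ?_)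
    exact Finset.mem_filter.2 ⟨hγ, j, hj⟩
  rw [← Finset.sum_subset (Finset.filter_subset _ _) hz, ← hpair, Finset.sum_pair hne]

end Gyr

namespace Gyr
set_option linter.unusedSectionVars false
variable {V E : Type} [Fintype V] [Fintype E] {ends : E → Sym2 V}
  {Γ : E → CycleIn V E ends}

/-- alternating length-4 cell. -/
def altC (γ : CycleIn V E ends) (ψ : E → Bool) : Prop :=
  γ.len = 4 ∧ ∀ i, ψ (γ.edge i) ≠ ψ (γ.edge (i + 1))

lemma HG_def (ψ : E → Bool) (e : E) :
    HG ends Γ ψ e = if altC (Γ e) ψ then ψ e else !(ψ e) := by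
  by_cases h : altC (Γ e) ψ
  · have h' : (Γ e).len = 4 ∧ ∀ i, ψ ((Γ e).edge i) ≠ ψ ((Γ e).edge (i + 1)) := h
    unfold HG
    rw [if_pos h', if_pos h]
  · have h' : ¬((Γ e).len = 4 ∧ ∀ i, ψ ((Γ e).edge i) ≠ ψ ((Γ e).edge (i + 1))) := h
    unfold HG
    rw [if_neg h', if_neg h]

lemma HG_cell_alt (hpart : IsCyclePartition ends Γ) {ψ : E → Bool} {e : E}
    (halt : altC (Γ e) ψ) (i : ZMod (Γ e).len) :
    HG ends Γ ψ ((Γ e).edge i) = ψ ((Γ e).edge i) := by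
  rw [HG_def, cell_edge_cellOf hpart e i, if_pos halt]

lemma HG_cell_flip (hpart : IsCyclePartition ends Γ) {ψ : E → Bool} {e : E}
    (hflip : ¬ altC (Γ e) ψ) (i : ZMod (Γ e).len) :
    HG ends Γ ψ ((Γ e).edge i) = !(ψ ((Γ e).edge i)) := by
  rw [HG_def, cell_edge_cellOf hpart e i, if_neg hflip]

lemma altC_HG (hpart : IsCyclePartition ends Γ) (ψ : E → Bool) (e : E) :
    altC (Γ e) (HG ends Γ ψ) ↔ altC (Γ e) ψ := by
  by_cases h : altC (Γ e) ψ
  · have hc := HG_cell_alt hpart h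
    unfold altC
    constructor
    · intro h'
      exact ⟨h'.1, fun i => by rw [← hc i, ← hc (i+1)]; exact h'.2 i⟩
    · intro h'
      exact ⟨h'.1, fun i => by rw [hc i, hc (i+1)]; exact h'.2 i⟩
  · have hc := HG_cell_flip hpart h
    constructor
    · intro h'
      refine absurd ⟨h'.1, fun i => ?_⟩ h
      have := h'.2 i
      rw [hc i, hc (i+1)] at this
      intro hcontra; rw [hcontra] at this; exact this rfl
    · intro h'; exact absurd h' h

lemma HG_invol (hpart : IsCyclePartition ends Γ) (ψ : E → Bool) :
    HG ends Γ (HG ends Γ ψ) = ψ := by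
  funext e
  obtain ⟨i, hi⟩ := hpart.1 e
  by_cases h : altC (Γ e) ψ
  · have h2 : altC (Γ e) (HG ends Γ ψ) := (altC_HG hpart ψ e).2 h
    rw [← hi, HG_cell_alt hpart h2, HG_cell_alt hpart h]
  · have h2 : ¬ altC (Γ e) (HG ends Γ ψ) := fun hh => h ((altC_HG hpart ψ e).1 hh)
    rw [← hi, HG_cell_flip hpart h2, HG_cell_flip hpart h, Bool.not_not]

lemma halfOf_HG (hpart : IsCyclePartition ends Γ) (ψ : E → Bool) (e : E) (v : V) :
    halfOf (Γ e) (HG ends Γ ψ) v ↔ halfOf (Γ e) ψ v := by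
  unfold halfOf
  by_cases h : altC (Γ e) ψ
  · have hc := HG_cell_alt hpart h
    constructor <;> rintro ⟨j, hj, hne⟩ <;> refine ⟨j, hj, ?_⟩
    · rwa [hc (j-1), hc j] at hne
    · rwa [hc (j-1), hc j]
  · have hc := HG_cell_flip hpart h
    constructor <;> rintro ⟨j, hj, hne⟩ <;> refine ⟨j, hj, ?_⟩
    · rw [hc (j-1), hc j] at hne
      intro hcontra; rw [hcontra] at hne; exact hne rfl
    · rw [hc (j-1), hc j]
      intro hcontra; rw [Bool.not_inj hcontra] at hne; exact hne rfl

lemma bcc_HG_alt (hpart : IsCyclePartition ends Γ) {ψ : E → Bool} {e : E}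
    (halt : altC (Γ e) ψ) (b : Bool) (v : V) :
    bcc (Γ e) (HG ends Γ ψ) b v = bcc (Γ e) ψ b v := by
  unfold bcc cellSum
  letI : NeZero (Γ e).len := ⟨(Γ e).lenPos.ne'⟩
  refine Finset.sum_congr rfl fun i _ => ?_
  show (if HG ends Γ ψ ((Γ e).edge i) = b then incG ends ((Γ e).edge i) v else 0)
    = (if ψ ((Γ e).edge i) = b then incG ends ((Γ e).edge i) v else 0)
  rw [HG_cell_alt hpart halt i]

lemma bcc_HG_flip (hpart : IsCyclePartition ends Γ) {ψ : E → Bool} {e : E}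
    (hflip : ¬ altC (Γ e) ψ) (b : Bool) (v : V) :
    bcc (Γ e) (HG ends Γ ψ) b v = bcc (Γ e) ψ (!b) v := by
  unfold bcc cellSum
  letI : NeZero (Γ e).len := ⟨(Γ e).lenPos.ne'⟩
  refine Finset.sum_congr rfl fun i _ => ?_
  show (if HG ends Γ ψ ((Γ e).edge i) = b then incG ends ((Γ e).edge i) v else 0)
    = (if ψ ((Γ e).edge i) = !b then incG ends ((Γ e).edge i) v else 0)
  rw [HG_cell_flip hpart hflip i]
  cases hψ : ψ ((Γ e).edge i) <;> cases b <;> simp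

lemma alt_bcc_one {ψ : E → Bool} {γ : CycleIn V E ends} (halt : γ.len = 4 ∧
    ∀ i, ψ (γ.edge i) ≠ ψ (γ.edge (i + 1))) (b : Bool) (j : ZMod γ.len) :
    bcc γ ψ b (γ.vtx j) = 1 := by
  rw [bcc_one_iff γ ψ b j]
  have := halt.2 (j - 1)
  rwa [sub_add_cancel] at this

lemma bdeg'_eq_of_agree {ψ ψ' : E → Bool} {v : V}
    (h : ∀ e, v ∈ ends e → ψ e = ψ' e) (b : Bool) :
    bdeg' ends ψ b v = bdeg' ends ψ' b v := by
  unfold bdeg'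
  refine Finset.sum_congr rfl fun e _ => ?_
  by_cases he : v ∈ ends e
  · rw [h e he]
  · rw [incG_eq_zero he, ite_self, ite_self]

lemma Vpp_not_iff (τ : E → Bool) (v : V) :
    Vpp ends (fun e => !(τ e)) v ↔ Vpp ends τ v := by
  unfold Vpp
  have h1 : bdegG ends (fun e => !(τ e)) v = bdeg' ends τ false v := by
    rw [bdegG_eq_bdeg']
    unfold bdeg'
    refine Finset.sum_congr rfl fun e _ => ?_
    cases h : τ e <;> simp [h]
  have h2 := bdeg'_add_bdeg' (ends := ends) τ v
  rw [h1, bdegG_eq_bdeg']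
  constructor
  · rintro ⟨hd, hb⟩; exact ⟨hd, by omega⟩
  · rintro ⟨hd, hb⟩; exact ⟨hd, by omega⟩

section fpl
variable {τ φ : E → Bool}

/-- P2: a cell through a degree-2 vertex is never alternating. -/
lemma boundary_not_alt (hpart : IsCyclePartition ends Γ)
    (hvalid : ValidTriplet ends τ Γ) (hφ : IsFplG ends τ φ) {v : V} {e : E}
    (hdeg2 : degG ends v = 2) (he : v ∈ ends e) : ¬ altC (Γ e) φ := by
  intro halt
  obtain ⟨j, hj⟩ := mem_cell_of_mem_ends hpart he
  have hb : bcc (Γ e) φ true v = 1 := by rw [hj]; exact alt_bcc_one halt true j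
  have hbd : bdegG ends φ v = 1 := by
    rw [bdegG_eq_bdeg', bdeg'_deg_two hpart hdeg2 he]; exact hb
  have hτ : bdegG ends τ v = 1 := by
    rw [bdegG_eq_bdeg',
      ← bdeg'_eq_of_agree (fun e' he' => hφ.1 e' v he' hdeg2) true,
      ← bdegG_eq_bdeg']
    exact hbd
  have hle := hvalid.2.2 e ⟨j, hj ▸ (⟨hdeg2, hτ⟩ : Vpp ends τ v)⟩
  rw [halt.1] at hle
  omega

lemma HG_boundary (hpart : IsCyclePartition ends Γ)
    (hvalid : ValidTriplet ends τ Γ) (hφ : IsFplG ends τ φ) {v : V} {e : E}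
    (hdeg2 : degG ends v = 2) (he : v ∈ ends e) :
    HG ends Γ φ e = !(φ e) := by
  rw [HG_def, if_neg (boundary_not_alt hpart hvalid hφ hdeg2 he)]

/-- each cell at a vertex balances: `bcc(HGφ) + bcc(φ) = 2` (colour `b`). -/
lemma bcc_HG_add (hpart : IsCyclePartition ends Γ) {ψ : E → Bool} {e : E} {v : V}
    (he : v ∈ ends e) (b : Bool) :
    bcc (Γ e) (HG ends Γ ψ) b v + bcc (Γ e) ψ b v = 2 := by
  obtain ⟨j, hj⟩ := mem_cell_of_mem_ends hpart he
  by_cases h : altC (Γ e) ψ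
  · rw [bcc_HG_alt hpart h, hj, alt_bcc_one h b j]
  · rw [bcc_HG_flip hpart h]
    have h1 := bcc_add_bcc (Γ e) ψ v
    rw [hj] at h1 ⊢
    rw [cellDeg_vtx] at h1
    cases b
    · simp only [Bool.not_false]; omega
    · simp only [Bool.not_true]; omega

/-- Part 1: `H_Γ(φ)` is an FPL with complemented boundary condition. -/
lemma isFpl_HG (hpart : IsCyclePartition ends Γ) (hvalid : ValidTriplet ends τ Γ)
    (hφ : IsFplG ends τ φ) : IsFplG ends (fun e => !(τ e)) (HG ends Γ φ) := by
  constructor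
  · intro e v he hdeg2
    rw [HG_boundary hpart hvalid hφ hdeg2 he, hφ.1 e v he hdeg2]
  · intro v hdeg4
    obtain ⟨e, e', he, he', hne⟩ := deg_four_cells hpart hdeg4
    have hsumφ : bcc (Γ e) φ true v + bcc (Γ e') φ true v = 2 := by
      rw [← bdeg'_deg_four hpart hdeg4 he he' hne φ true, ← bdegG_eq_bdeg']
      exact hφ.2 v hdeg4
    have h1 := bcc_HG_add hpart (ψ := φ) he true
    have h2 := bcc_HG_add hpart (ψ := φ) he' true
    rw [bdegG_eq_bdeg', bdeg'_deg_four hpart hdeg4 he he' hne (HG ends Γ φ) true]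
    omega

end fpl
end Gyr

namespace Gyr
set_option linter.unusedSectionVars false
variable {V E : Type} [Fintype V] [Fintype E] {ends : E → Sym2 V}

/-- connectivity within a single cell. -/
def CCon (γ : CycleIn V E ends) (ψ : E → Bool) (b : Bool) : V → V → Prop :=
  Relation.ReflTransGen (fun x y => ∃ i, ψ (γ.edge i) = b ∧
    x ∈ ends (γ.edge i) ∧ y ∈ ends (γ.edge i))

lemma ccon_symm {γ : CycleIn V E ends} {ψ : E → Bool} {b : Bool} {x y : V}
    (h : CCon γ ψ b x y) : CCon γ ψ b y x :=
  (@Relation.ReflTransGen.symmetric _ (fun x y => ∃ i, ψ (γ.edge i) = b ∧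
    x ∈ ends (γ.edge i) ∧ y ∈ ends (γ.edge i))
    ⟨fun _ _ ⟨i, h1, h2, h3⟩ => ⟨i, h1, h3, h2⟩⟩).symm _ _ h

lemma ccon_step {γ : CycleIn V E ends} {ψ : E → Bool} {b : Bool} (i : ZMod γ.len)
    (h : ψ (γ.edge i) = b) : CCon γ ψ b (γ.vtx i) (γ.vtx (i + 1)) :=
  Relation.ReflTransGen.single ⟨i, h, vtx_mem_ends γ i, vtx_succ_mem_ends γ i⟩

lemma bool_resolve {x y b : Bool} (hxy : x ≠ y) (hx : ¬ x = b) : y = b := by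
  cases x <;> cases y <;> cases b <;> simp_all

lemma bool_resolve' {x b : Bool} (hx : ¬ x = b) : x = !b := by
  cases x <;> cases b <;> simp_all

lemma natCast_self_zero (γ : CycleIn V E ends) {n : ℕ} (hlen : γ.len = n) :
    ((n : ℕ) : ZMod γ.len) = 0 := by
  have h : ((n : ℕ) : ZMod γ.len) = ((γ.len : ℕ) : ZMod γ.len) := by rw [hlen]
  rw [h, ZMod.natCast_self]

lemma half_two_le (γ : CycleIn V E ends) {ψ : E → Bool} {j : ZMod γ.len}
    (hj : ψ (γ.edge (j - 1)) ≠ ψ (γ.edge j)) : 2 ≤ γ.len := by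
  rcases len_cases γ with h1 | h2
  · exact absurd (by rw [subsingleton_zmod_one γ h1 (j-1) j]) hj
  · exact h2

lemma zmod_enum (γ : CycleIn V E ends) (i j : ZMod γ.len) :
    ∃ d : ℕ, d < γ.len ∧ i = j + (d : ZMod γ.len) := by
  letI : NeZero γ.len := ⟨γ.lenPos.ne'⟩
  refine ⟨(i - j).val, ZMod.val_lt _, ?_⟩
  rw [ZMod.natCast_rightInverse (i - j)]
  ring

/-- alternation from four consecutive inequalities. -/
lemma alt_of_four (γ : CycleIn V E ends) {ψ : E → Bool} (h4 : γ.len = 4)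
    (j : ZMod γ.len)
    (h0 : ψ (γ.edge j) ≠ ψ (γ.edge (j + 1)))
    (h1 : ψ (γ.edge (j + 1)) ≠ ψ (γ.edge (j + 2)))
    (h2 : ψ (γ.edge (j + 2)) ≠ ψ (γ.edge (j + 3)))
    (h3 : ψ (γ.edge (j + 3)) ≠ ψ (γ.edge j)) :
    ∀ i, ψ (γ.edge i) ≠ ψ (γ.edge (i + 1)) := by
  have hz : ((4 : ℕ) : ZMod γ.len) = 0 := natCast_self_zero γ h4
  intro i
  obtain ⟨d, hd, rfl⟩ := zmod_enum γ i j
  rw [h4] at hd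
  interval_cases d
  · simpa using h0
  · have : j + ((1 : ℕ) : ZMod γ.len) + 1 = j + 2 := by push_cast; ring
    rw [this]
    simpa using h1
  · have : j + ((2 : ℕ) : ZMod γ.len) + 1 = j + 3 := by push_cast; ring
    rw [this]
    simpa using h2
  · have h1' : j + ((3 : ℕ) : ZMod γ.len) + 1 = j := by
      push_cast
      linear_combination hz
    rw [h1']
    have h2' : j + ((3 : ℕ) : ZMod γ.len) = j + 3 := by push_cast; ring
    rw [h2']
    exact h3

section cases4
variable {γ : CycleIn V E ends} {ψ : E → Bool} {b : Bool}

/-- adjacent halves on a 2-cycle are connected. -/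
lemma connA2 (hlen : γ.len = 2) {j : ZMod γ.len}
    (hj : ψ (γ.edge (j - 1)) ≠ ψ (γ.edge j)) :
    CCon γ ψ b (γ.vtx j) (γ.vtx (j + 1)) := by
  have hz : ((2 : ℕ) : ZMod γ.len) = 0 := natCast_self_zero γ hlen
  by_cases hcj : ψ (γ.edge j) = b
  · exact ccon_step j hcj
  · have hjm : j - 1 = j + 1 := by push_cast at hz ⊢; linear_combination - hz
    rw [hjm] at hj
    have hc1 : ψ (γ.edge (j + 1)) = b := bool_resolve hj.symm hcj
    have hstep := ccon_step (γ := γ) (j + 1) hc1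
    have hjj : j + 1 + 1 = j := by push_cast at hz ⊢; linear_combination hz
    rw [hjj] at hstep
    exact ccon_symm hstep

/-- adjacent halves on a 3-cycle are connected. -/
lemma connA3 (hlen : γ.len = 3) {j : ZMod γ.len}
    (hj : ψ (γ.edge (j - 1)) ≠ ψ (γ.edge j))
    (hk : ψ (γ.edge j) ≠ ψ (γ.edge (j + 1))) :
    CCon γ ψ b (γ.vtx j) (γ.vtx (j + 1)) := by
  have hz : ((3 : ℕ) : ZMod γ.len) = 0 := natCast_self_zero γ hlen
  by_cases hcj : ψ (γ.edge j) = b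
  · exact ccon_step j hcj
  · have hc1 : ψ (γ.edge (j + 1)) = b := bool_resolve hk hcj
    have hjm : j - 1 = j + 2 := by push_cast at hz ⊢; linear_combination - hz
    rw [hjm] at hj
    have hc2 : ψ (γ.edge (j + 2)) = b := bool_resolve hj.symm hcj
    have hs1 := ccon_step (γ := γ) (j + 1) hc1
    have hs2 := ccon_step (γ := γ) (j + 2) hc2
    have he1 : j + 1 + 1 = j + 2 := by ring
    have he2 : j + 2 + 1 = j := by push_cast at hz ⊢; linear_combination hz
    rw [he1] at hs1
    rw [he2] at hs2
    exact ccon_symm (hs1.trans hs2)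

/-- adjacent halves on a non-alternating 4-cycle are connected. -/
lemma connA4 (hlen : γ.len = 4)
    (hnalt : ¬ (γ.len = 4 ∧ ∀ i, ψ (γ.edge i) ≠ ψ (γ.edge (i + 1))))
    {j : ZMod γ.len}
    (hj : ψ (γ.edge (j - 1)) ≠ ψ (γ.edge j))
    (hk : ψ (γ.edge j) ≠ ψ (γ.edge (j + 1))) :
    CCon γ ψ b (γ.vtx j) (γ.vtx (j + 1)) := by
  have hz : ((4 : ℕ) : ZMod γ.len) = 0 := natCast_self_zero γ hlen
  by_cases hcj : ψ (γ.edge j) = b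
  · exact ccon_step j hcj
  · have hc1 : ψ (γ.edge (j + 1)) = b := bool_resolve hk hcj
    have hjm : j - 1 = j + 3 := by push_cast at hz ⊢; linear_combination - hz
    rw [hjm] at hj
    have hc3 : ψ (γ.edge (j + 3)) = b := bool_resolve hj.symm hcj
    by_cases hc2 : ψ (γ.edge (j + 2)) = b
    · have hs1 := ccon_step (γ := γ) (j + 1) hc1
      have hs2 := ccon_step (γ := γ) (j + 2) hc2
      have hs3 := ccon_step (γ := γ) (j + 3) hc3
      have he1 : j + 1 + 1 = j + 2 := by ring
      have he2 : j + 2 + 1 = j + 3 := by ring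
      have he3 : j + 3 + 1 = j := by push_cast at hz ⊢; linear_combination hz
      rw [he1] at hs1; rw [he2] at hs2; rw [he3] at hs3
      exact ccon_symm ((hs1.trans hs2).trans hs3)
    · exfalso
      have hxj : ψ (γ.edge j) = !b := bool_resolve' hcj
      have hx2 : ψ (γ.edge (j + 2)) = !b := bool_resolve' hc2
      refine hnalt ⟨hlen, alt_of_four γ hlen j ?_ ?_ ?_ ?_⟩
      · rw [hxj, hc1]; cases b <;> simp
      · rw [hx2, hc1]; cases b <;> simp
      · rw [hx2, hc3]; cases b <;> simp
      · rw [hxj, hc3]; cases b <;> simp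

/-- opposite halves on a non-alternating 4-cycle are connected. -/
lemma connB4 (hlen : γ.len = 4)
    (hnalt : ¬ (γ.len = 4 ∧ ∀ i, ψ (γ.edge i) ≠ ψ (γ.edge (i + 1))))
    {j : ZMod γ.len}
    (hj : ψ (γ.edge (j - 1)) ≠ ψ (γ.edge j))
    (hk : ψ (γ.edge (j + 1)) ≠ ψ (γ.edge (j + 2))) :
    CCon γ ψ b (γ.vtx j) (γ.vtx (j + 2)) := by
  have hz : ((4 : ℕ) : ZMod γ.len) = 0 := natCast_self_zero γ hlen
  have hjm : j - 1 = j + 3 := by push_cast at hz ⊢; linear_combination - hz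
  rw [hjm] at hj
  by_cases hcj : ψ (γ.edge j) = b
  · by_cases hc1 : ψ (γ.edge (j + 1)) = b
    · have hs0 := ccon_step (γ := γ) j hcj
      have hs1 := ccon_step (γ := γ) (j + 1) hc1
      have he1 : j + 1 + 1 = j + 2 := by ring
      rw [he1] at hs1
      exact hs0.trans hs1
    · exfalso
      have hc2 : ψ (γ.edge (j + 2)) = b := bool_resolve hk hc1
      have hx1 : ψ (γ.edge (j + 1)) = !b := bool_resolve' hc1
      have hx3 : ψ (γ.edge (j + 3)) = !b := bool_resolve' (fun hcon => hj (by rw [hcon, hcj]))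
      refine hnalt ⟨hlen, alt_of_four γ hlen j ?_ ?_ ?_ ?_⟩
      · rw [hcj, hx1]; cases b <;> simp
      · rw [hx1, hc2]; cases b <;> simp
      · rw [hc2, hx3]; cases b <;> simp
      · rw [hx3, hcj]; cases b <;> simp
  · have hc3 : ψ (γ.edge (j + 3)) = b := bool_resolve hj.symm hcj
    by_cases hc2 : ψ (γ.edge (j + 2)) = b
    · have hs3 := ccon_step (γ := γ) (j + 3) hc3
      have hs2 := ccon_step (γ := γ) (j + 2) hc2
      have he3 : j + 3 + 1 = j := by push_cast at hz ⊢; linear_combination hz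
      have he2 : j + 2 + 1 = j + 3 := by ring
      rw [he3] at hs3; rw [he2] at hs2
      exact (ccon_symm hs3).trans (ccon_symm hs2)
    · exfalso
      have hc1 : ψ (γ.edge (j + 1)) = b := by
        by_contra hc1
        exact hc2 (bool_resolve hk hc1)
      have hxj : ψ (γ.edge j) = !b := bool_resolve' hcj
      have hx2 : ψ (γ.edge (j + 2)) = !b := bool_resolve' hc2
      refine hnalt ⟨hlen, alt_of_four γ hlen j ?_ ?_ ?_ ?_⟩
      · rw [hxj, hc1]; cases b <;> simp
      · rw [hc1, hx2]; cases b <;> simp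
      · rw [hx2, hc3]; cases b <;> simp
      · rw [hc3, hxj]; cases b <;> simp

end cases4

/-- **Local lemma**: on a non-alternating cell of length ≤ 4, any two half
vertices are joined inside the cell by edges of either colour. -/
lemma half_conn (γ : CycleIn V E ends) {ψ : E → Bool} (hlen : γ.len ≤ 4)
    (hnalt : ¬ (γ.len = 4 ∧ ∀ i, ψ (γ.edge i) ≠ ψ (γ.edge (i + 1))))
    {j k : ZMod γ.len} (hj : ψ (γ.edge (j - 1)) ≠ ψ (γ.edge j))
    (hk : ψ (γ.edge (k - 1)) ≠ ψ (γ.edge k)) (b : Bool) :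
    CCon γ ψ b (γ.vtx j) (γ.vtx k) := by
  have h2 : 2 ≤ γ.len := half_two_le γ hj
  obtain ⟨d, hd, rfl⟩ := zmod_enum γ k j
  have hcase : γ.len = 2 ∨ γ.len = 3 ∨ γ.len = 4 := by omega
  rcases hcase with hL | hL | hL
  · -- length 2
    have hz : ((2 : ℕ) : ZMod γ.len) = 0 := natCast_self_zero γ hL
    rw [hL] at hd
    interval_cases d
    · simpa using (id Relation.ReflTransGen.refl : CCon γ ψ b (γ.vtx j) (γ.vtx j))
    · push_cast
      exact connA2 hL hj
  · -- length 3
    have hz : ((3 : ℕ) : ZMod γ.len) = 0 := natCast_self_zero γ hL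
    rw [hL] at hd
    interval_cases d
    · simpa using (id Relation.ReflTransGen.refl : CCon γ ψ b (γ.vtx j) (γ.vtx j))
    · push_cast
      push_cast at hk
      have he : j + 1 - 1 = j := by ring
      rw [he] at hk
      exact connA3 hL hj hk
    · push_cast
      push_cast at hk
      -- k = j + 2 ; apply `connA3` at k and symmetrise
      have he : j + 2 - 1 = j + 1 := by ring
      rw [he] at hk
      have hk2 : ψ (γ.edge (j + 2 - 1)) ≠ ψ (γ.edge (j + 2)) := by
        rw [he]; exact hk
      have hj2 : ψ (γ.edge (j + 2)) ≠ ψ (γ.edge (j + 2 + 1)) := by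
        have he2 : j + 2 + 1 = j := by push_cast at hz; linear_combination hz
        have he3 : j - 1 = j + 2 := by push_cast at hz; linear_combination - hz
        rw [he2, ← he3]
        exact hj
      have := connA3 (b := b) hL hk2 hj2
      have he2 : j + 2 + 1 = j := by push_cast at hz; linear_combination hz
      rw [he2] at this
      exact ccon_symm this
  · -- length 4
    have hz : ((4 : ℕ) : ZMod γ.len) = 0 := natCast_self_zero γ hL
    rw [hL] at hd
    interval_cases d
    · simpa using (id Relation.ReflTransGen.refl : CCon γ ψ b (γ.vtx j) (γ.vtx j))
    · push_cast
      push_cast at hk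
      have he : j + 1 - 1 = j := by ring
      rw [he] at hk
      exact connA4 hL hnalt hj hk
    · push_cast
      push_cast at hk
      have he : j + 2 - 1 = j + 1 := by ring
      rw [he] at hk
      exact connB4 hL hnalt hj hk
    · push_cast
      push_cast at hk
      have he : j + 3 - 1 = j + 2 := by ring
      rw [he] at hk
      have hj2 : ψ (γ.edge (j + 3)) ≠ ψ (γ.edge (j + 3 + 1)) := by
        have he2 : j + 3 + 1 = j := by push_cast at hz; linear_combination hz
        have he3 : j - 1 = j + 3 := by push_cast at hz; linear_combination - hz
        rw [he2, ← he3]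
        exact hj
      have hk2 : ψ (γ.edge (j + 3 - 1)) ≠ ψ (γ.edge (j + 3)) := by
        rw [he]; exact hk
      have := connA4 (b := b) hL hnalt hk2 hj2
      have he2 : j + 3 + 1 = j := by push_cast at hz; linear_combination hz
      rw [he2] at this
      exact ccon_symm this

end Gyr

namespace Gyr
set_option linter.unusedSectionVars false
variable {V E : Type} [Fintype V] [Fintype E] {ends : E → Sym2 V}
  {Γ : E → CycleIn V E ends}

/-- `v` is a half vertex (of some incident cell). -/
def HalfV (Γ : E → CycleIn V E ends) (ψ : E → Bool) (v : V) : Prop :=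
  ∃ e, v ∈ ends e ∧ halfOf (Γ e) ψ v

/-- one reduced step: two half vertices of a common cell joined inside it. -/
def SRel (Γ : E → CycleIn V E ends) (ψ : E → Bool) (b : Bool) (u w : V) : Prop :=
  ∃ e, halfOf (Γ e) ψ u ∧ halfOf (Γ e) ψ w ∧ CCon (Γ e) ψ b u w

lemma HalfV_HG (hpart : IsCyclePartition ends Γ) (ψ : E → Bool) (v : V) :
    HalfV Γ (HG ends Γ ψ) v ↔ HalfV Γ ψ v := by
  unfold HalfV
  constructor <;> rintro ⟨e, he, hh⟩ <;> refine ⟨e, he, ?_⟩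
  · exact (halfOf_HG hpart ψ e v).mp hh
  · exact (halfOf_HG hpart ψ e v).mpr hh

lemma ccon_HG_alt (hpart : IsCyclePartition ends Γ) {ψ : E → Bool} {e : E}
    (halt : altC (Γ e) ψ) (b : Bool) {x y : V} :
    CCon (Γ e) (HG ends Γ ψ) b x y ↔ CCon (Γ e) ψ b x y := by
  constructor <;> refine Relation.ReflTransGen.mono ?_ _ _
  · rintro p q ⟨i, hc, hp, hq⟩
    exact ⟨i, by rwa [HG_cell_alt hpart halt i] at hc, hp, hq⟩
  · rintro p q ⟨i, hc, hp, hq⟩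
    exact ⟨i, by rwa [← HG_cell_alt hpart halt i] at hc, hp, hq⟩

lemma ccon_le_vconn {γ : CycleIn V E ends} {ψ : E → Bool} {b : Bool} {x y : V}
    (h : CCon γ ψ b x y) : VConn ends ψ b x y := by
  refine Relation.ReflTransGen.mono ?_ _ _ h
  rintro p q ⟨i, hc, hp, hq⟩
  exact ⟨γ.edge i, hc, hp, hq⟩

lemma vconn_trans {ψ : E → Bool} {b : Bool} {x y z : V} (h1 : VConn ends ψ b x y)
    (h2 : VConn ends ψ b y z) : VConn ends ψ b x z :=
  Relation.ReflTransGen.trans h1 h2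

lemma vconn_symm {ψ : E → Bool} {b : Bool} {x y : V} (h : VConn ends ψ b x y) :
    VConn ends ψ b y x :=
  (@Relation.ReflTransGen.symmetric _ (fun u w => ∃ e, ψ e = b ∧ u ∈ ends e ∧ w ∈ ends e)
    ⟨fun _ _ ⟨e, h1, h2, h3⟩ => ⟨e, h1, h3, h2⟩⟩).symm _ _ h

lemma bdeg'_four {ψ : E → Bool} {v : V}
    (hψ4 : ∀ v, degG ends v = 4 → bdegG ends ψ v = 2)
    (hd4 : degG ends v = 4) (b : Bool) : bdeg' ends ψ b v = 2 := by
  have ht : bdeg' ends ψ true v = 2 := by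
    rw [← bdegG_eq_bdeg']; exact hψ4 v hd4
  have := bdeg'_add_bdeg' (ends := ends) ψ v
  cases b
  · omega
  · exact ht

/-- a half vertex is half in every cell through it (on FPL-like configurations). -/
lemma half_all_cells (hpart : IsCyclePartition ends Γ)
    {ψ : E → Bool} (hψ4 : ∀ v, degG ends v = 4 → bdegG ends ψ v = 2)
    (hdeg : ∀ v, degG ends v = 4 ∨ degG ends v = 2)
    {v : V} (hv : HalfV Γ ψ v) {e' : E} (he' : v ∈ ends e') :
    halfOf (Γ e') ψ v := by
  obtain ⟨e, he, hhalf⟩ := hv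
  by_cases hcell : Γ e' = Γ e
  · rwa [hcell]
  · rcases hdeg v with h4 | h2
    · obtain ⟨j, hj, hne⟩ := hhalf
      have hb1 : bcc (Γ e) ψ true v = 1 := by
        rw [hj]
        exact (halfOf_iff_bcc_one (Γ e) ψ true j).1 ⟨j, rfl, hne⟩
      have hsum : bcc (Γ e) ψ true v + bcc (Γ e') ψ true v = 2 := by
        rw [← bdeg'_deg_four hpart h4 he he' (fun h => hcell h.symm) ψ true]
        exact bdeg'_four hψ4 h4 true
      have hb1' : bcc (Γ e') ψ true v = 1 := by omega
      obtain ⟨j', hj'⟩ := mem_cell_of_mem_ends hpart he'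
      rw [hj'] at hb1' ⊢
      exact (halfOf_iff_bcc_one (Γ e') ψ true j').2 hb1'
    · exact absurd (deg_two_unique_cell hpart h2 he he') hcell

/-- key transition lemma: if a `b`-path inside cell `Γ e` reaches `x'` which also has
a `b`-edge `e'` in a different cell, then `x'` is a half vertex of both cells. -/
lemma transition_half (hpart : IsCyclePartition ends Γ)
    {ψ : E → Bool} (hψ4 : ∀ v, degG ends v = 4 → bdegG ends ψ v = 2)
    (hdeg : ∀ v, degG ends v = 4 ∨ degG ends v = 2)
    {e e' : E} {b : Bool} {y x' : V} (hy : halfOf (Γ e) ψ y)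
    (hcc : CCon (Γ e) ψ b y x') (hc' : ψ e' = b) (hx'm : x' ∈ ends e')
    (hcell : Γ e' ≠ Γ e) :
    halfOf (Γ e) ψ x' ∧ halfOf (Γ e') ψ x' := by
  -- find an edge of cell `Γ e` incident to `x'`, with `bcc ≥ 1`
  have hmain : (∃ a, x' ∈ ends a ∧ Γ a = Γ e) ∧ 1 ≤ bcc (Γ e) ψ b x' := by
    rcases Relation.ReflTransGen.cases_tail hcc with heq | ⟨z, _, i, hci, _, hxm2⟩
    · have hh : halfOf (Γ e) ψ x' := heq ▸ hy
      obtain ⟨j, hj, hne⟩ := hh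
      refine ⟨⟨(Γ e).edge j, hj ▸ vtx_mem_ends (Γ e) j, cell_edge_cellOf hpart e j⟩, ?_⟩
      have : bcc (Γ e) ψ b x' = 1 := by
        rw [hj]
        exact (halfOf_iff_bcc_one (Γ e) ψ b j).1 ⟨j, rfl, hne⟩
      omega
    · exact ⟨⟨(Γ e).edge i, hxm2, cell_edge_cellOf hpart e i⟩, bcc_pos (Γ e) hci hxm2⟩
  obtain ⟨⟨a, ham, haΓ⟩, hge⟩ := hmain
  rcases hdeg x' with h4 | h2
  · have hsum : bcc (Γ e) ψ b x' + bcc (Γ e') ψ b x' = 2 := by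
      have := bdeg'_deg_four hpart h4 ham hx'm (by rw [haΓ]; exact fun h => hcell h.symm) ψ b
      rw [haΓ] at this
      rw [← this]
      exact bdeg'_four hψ4 h4 b
    have hge' : 1 ≤ bcc (Γ e') ψ b x' := by
      obtain ⟨i', hi'⟩ := hpart.1 e'
      exact bcc_pos (Γ e') (by rwa [hi']) (by rwa [hi'])
    have hja : ∃ j : ZMod (Γ e).len, x' = (Γ e).vtx j := by
      have := mem_cell_of_mem_ends hpart ham
      rwa [haΓ] at this
    obtain ⟨j1, hj1⟩ := hja
    obtain ⟨j2, hj2⟩ := mem_cell_of_mem_ends hpart hx'm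
    constructor
    · rw [hj1]
      exact (halfOf_iff_bcc_one (Γ e) ψ b j1).2 (by rw [← hj1]; omega)
    · rw [hj2]
      exact (halfOf_iff_bcc_one (Γ e') ψ b j2).2 (by rw [← hj2]; omega)
  · exfalso
    have h := deg_two_unique_cell hpart h2 ham hx'm
    rw [haΓ] at h
    exact hcell h

/-- C8: reachability factors through reduced steps between half vertices. -/
lemma reach (hpart : IsCyclePartition ends Γ)
    {ψ : E → Bool} (hψ4 : ∀ v, degG ends v = 4 → bdegG ends ψ v = 2)
    (hdeg : ∀ v, degG ends v = 4 ∨ degG ends v = 2)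
    {u : V} (hu : HalfV Γ ψ u) (b : Bool) :
    ∀ x, VConn ends ψ b u x → x = u ∨ ∃ e y,
      Relation.ReflTransGen (SRel Γ ψ b) u y ∧ halfOf (Γ e) ψ y ∧ CCon (Γ e) ψ b y x := by
  intro x hx
  have hx' : Relation.ReflTransGen
      (fun p q => ∃ e, ψ e = b ∧ p ∈ ends e ∧ q ∈ ends e) u x := hx
  clear hx
  induction hx' with
  | refl => exact Or.inl rfl
  | @tail x' x hpath hstep ih =>
    obtain ⟨e', hc', hx'm, hxm⟩ := hstep
    right
    rcases ih with rfl | ⟨e, y, hrtg, hy, hcc⟩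
    · have hh := half_all_cells hpart hψ4 hdeg hu hx'm
      obtain ⟨i, hi⟩ := hpart.1 e'
      exact ⟨e', x', Relation.ReflTransGen.refl, hh,
        Relation.ReflTransGen.single ⟨i, by rwa [hi], by rwa [hi], by rwa [hi]⟩⟩
    · by_cases hcell : Γ e' = Γ e
      · obtain ⟨i, hi⟩ := (fiber_eq hpart e e').1 hcell
        exact ⟨e, y, hrtg, hy, hcc.tail
          ⟨i, by rwa [hi], by rwa [hi], by rwa [hi]⟩⟩
      · obtain ⟨hA, hB⟩ := transition_half hpart hψ4 hdeg hy hcc hc' hx'm hcell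
        refine ⟨e', x', hrtg.tail ⟨e, hy, hA, hcc⟩, hB, ?_⟩
        obtain ⟨i', hi'⟩ := hpart.1 e'
        exact Relation.ReflTransGen.single ⟨i', by rwa [hi'], by rwa [hi'], by rwa [hi']⟩

lemma srel_le_vconn {ψ : E → Bool} {b : Bool} {u w : V}
    (h : Relation.ReflTransGen (SRel Γ ψ b) u w) : VConn ends ψ b u w := by
  induction h with
  | refl => exact Relation.ReflTransGen.refl
  | tail _ hstep ih =>
    obtain ⟨e, _, _, hcc⟩ := hstep
    exact vconn_trans ih (ccon_le_vconn hcc)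

/-- C9: between half vertices, connectivity is equivalent to reduced connectivity. -/
lemma vconn_iff_srel (hpart : IsCyclePartition ends Γ)
    {ψ : E → Bool} (hψ4 : ∀ v, degG ends v = 4 → bdegG ends ψ v = 2)
    (hdeg : ∀ v, degG ends v = 4 ∨ degG ends v = 2)
    {u w : V} (hu : HalfV Γ ψ u) (hw : HalfV Γ ψ w) (b : Bool) :
    VConn ends ψ b u w ↔ Relation.ReflTransGen (SRel Γ ψ b) u w := by
  constructor
  · intro h
    rcases reach hpart hψ4 hdeg hu b w h with rfl | ⟨e, y, hrtg, hy, hcc⟩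
    · exact Relation.ReflTransGen.refl
    · rcases Relation.ReflTransGen.cases_tail hcc with heq | ⟨z, _, i, hci, _, hwm⟩
      · rw [heq]; exact hrtg
      · have hwh : halfOf (Γ e) ψ w := by
          have := half_all_cells hpart hψ4 hdeg hw hwm
          rwa [cell_edge_cellOf hpart e i] at this
        exact hrtg.tail ⟨e, hy, hwh, hcc⟩
  · exact srel_le_vconn

/-- The reduced structure is invariant under gyration. -/
lemma srel_HG (hpart : IsCyclePartition ends Γ)
    (hlen : ∀ e, (Γ e).len ≤ 4) (ψ : E → Bool) (b : Bool) (u w : V) :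
    SRel Γ (HG ends Γ ψ) b u w ↔ SRel Γ ψ b u w := by
  constructor
  · rintro ⟨e, hu, hw, hcc⟩
    refine ⟨e, (halfOf_HG hpart ψ e u).1 hu, (halfOf_HG hpart ψ e w).1 hw, ?_⟩
    by_cases halt : altC (Γ e) ψ
    · exact (ccon_HG_alt hpart halt b).1 hcc
    · obtain ⟨j, hj, hnej⟩ := (halfOf_HG hpart ψ e u).1 hu
      obtain ⟨k, hk, hnek⟩ := (halfOf_HG hpart ψ e w).1 hw
      rw [hj, hk]
      exact half_conn (Γ e) (hlen e) halt hnej hnek b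
  · rintro ⟨e, hu, hw, hcc⟩
    refine ⟨e, (halfOf_HG hpart ψ e u).2 hu, (halfOf_HG hpart ψ e w).2 hw, ?_⟩
    by_cases halt : altC (Γ e) ψ
    · exact (ccon_HG_alt hpart halt b).2 hcc
    · obtain ⟨j, hj, hnej⟩ := (halfOf_HG hpart ψ e u).2 hu
      obtain ⟨k, hk, hnek⟩ := (halfOf_HG hpart ψ e w).2 hw
      rw [hj, hk]
      have hnalt' : ¬ altC (Γ e) (HG ends Γ ψ) := fun h => halt ((altC_HG hpart ψ e).1 h)
      exact half_conn (Γ e) (hlen e) hnalt' hnej hnek b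

/-- C10: gyration preserves connectivity between half vertices. -/
lemma vconn_HG_iff (hpart : IsCyclePartition ends Γ)
    (hlen : ∀ e, (Γ e).len ≤ 4)
    {ψ : E → Bool} (hψ4 : ∀ v, degG ends v = 4 → bdegG ends ψ v = 2)
    (hψ4H : ∀ v, degG ends v = 4 → bdegG ends (HG ends Γ ψ) v = 2)
    (hdeg : ∀ v, degG ends v = 4 ∨ degG ends v = 2)
    {u w : V} (hu : HalfV Γ ψ u) (hw : HalfV Γ ψ w) (b : Bool) :
    VConn ends ψ b u w ↔ VConn ends (HG ends Γ ψ) b u w := by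
  rw [vconn_iff_srel hpart hψ4 hdeg hu hw b,
    vconn_iff_srel hpart hψ4H hdeg ((HalfV_HG hpart ψ u).2 hu)
      ((HalfV_HG hpart ψ w).2 hw) b]
  constructor <;> refine Relation.ReflTransGen.mono ?_ _ _
  · exact fun p q h => (srel_HG hpart hlen ψ b p q).2 h
  · exact fun p q h => (srel_HG hpart hlen ψ b p q).1 h

end Gyr

namespace Gyr
set_option linter.unusedSectionVars false
variable {V E : Type} [Fintype V] [Fintype E] {ends : E → Sym2 V}
  {Γ : E → CycleIn V E ends}

def Q (ends : E → Sym2 V) (ψ : E → Bool) (b : Bool) (v : V) : Set V :=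
  {w | VConn ends ψ b v w ∧ ActiveV ends ψ b w}

lemma mem_Q {ψ : E → Bool} {b : Bool} {v w : V} :
    w ∈ Q ends ψ b v ↔ VConn ends ψ b v w ∧ ActiveV ends ψ b w := Iff.rfl

lemma mem_Q_self {ψ : E → Bool} {b : Bool} {v : V} (h : ActiveV ends ψ b v) :
    v ∈ Q ends ψ b v := ⟨Relation.ReflTransGen.refl, h⟩

lemma Q_eq {ψ : E → Bool} {b : Bool} {v v' : V} (h : VConn ends ψ b v v') :
    Q ends ψ b v = Q ends ψ b v' := by
  ext w
  exact ⟨fun ⟨h1, h2⟩ => ⟨vconn_trans (vconn_symm h) h1, h2⟩,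
    fun ⟨h1, h2⟩ => ⟨vconn_trans h h1, h2⟩⟩

lemma active_of_half (hpart : IsCyclePartition ends Γ) {ψ : E → Bool} {v : V}
    (h : HalfV Γ ψ v) (b : Bool) : ActiveV ends ψ b v := by
  obtain ⟨e, he, j, hj, hne⟩ := h
  have h1 : bcc (Γ e) ψ b v = 1 := by
    rw [hj]; exact (halfOf_iff_bcc_one (Γ e) ψ b j).1 ⟨j, rfl, hne⟩
  obtain ⟨i, hc, hm⟩ := exists_edge_of_bcc_pos (Γ e) (le_of_eq h1.symm)
  exact ⟨(Γ e).edge i, hc, hm⟩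

lemma active_HG_of_half (hpart : IsCyclePartition ends Γ) {ψ : E → Bool} {v : V}
    (h : HalfV Γ ψ v) (b : Bool) : ActiveV ends (HG ends Γ ψ) b v :=
  active_of_half hpart ((HalfV_HG hpart ψ v).2 h) b

/-- auxiliary: a second `b`-coloured cell at a vertex whose first cell already has
`bcc = 2` is impossible. -/
lemma no_second_cell (hpart : IsCyclePartition ends Γ)
    {ψ : E → Bool} (hψ4 : ∀ v, degG ends v = 4 → bdegG ends ψ v = 2)
    (hdeg : ∀ v, degG ends v = 4 ∨ degG ends v = 2)
    {e e'' : E} {b : Bool} {x : V}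
    (hb2 : bcc (Γ e) ψ b x = 2) {j : ZMod (Γ e).len} (hj : x = (Γ e).vtx j)
    (hxm : x ∈ ends e'') (hc : ψ e'' = b) : Γ e'' = Γ e := by
  by_contra hne
  have hmem : x ∈ ends ((Γ e).edge j) := hj ▸ vtx_mem_ends (Γ e) j
  have hΓj : Γ ((Γ e).edge j) = Γ e := cell_edge_cellOf hpart e j
  rcases hdeg x with h4 | h2
  · have hsum := bdeg'_deg_four hpart h4 hmem hxm (by rw [hΓj]; exact fun h => hne h.symm) ψ b
    rw [hΓj] at hsum
    rw [bdeg'_four hψ4 h4 b] at hsum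
    have hge : 1 ≤ bcc (Γ e'') ψ b x := by
      obtain ⟨i'', hi''⟩ := hpart.1 e''
      exact bcc_pos (Γ e'') (by rwa [hi'']) (by rwa [hi''])
    omega
  · have := deg_two_unique_cell hpart h2 hmem hxm
    rw [hΓj] at this
    exact hne this

/-- K1: a component without half vertices is a fully monochromatic cell. -/
lemma internal_cell (hpart : IsCyclePartition ends Γ)
    {ψ : E → Bool} (hψ4 : ∀ v, degG ends v = 4 → bdegG ends ψ v = 2)
    (hdeg : ∀ v, degG ends v = 4 ∨ degG ends v = 2)
    {b : Bool} {v₀ : V} (hact : ActiveV ends ψ b v₀)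
    (hnohalf : ∀ w ∈ Q ends ψ b v₀, ¬ HalfV Γ ψ w) :
    ∃ e, (∀ i, ψ ((Γ e).edge i) = b) ∧ Q ends ψ b v₀ = Set.range (Γ e).vtx := by
  obtain ⟨e, hce, hv₀e⟩ := hact
  have hact₀ : ActiveV ends ψ b v₀ := ⟨e, hce, hv₀e⟩
  -- claim 1 : everything reachable lies in the cell `Γ e`, with bcc = 2
  have claim1 : ∀ x, VConn ends ψ b v₀ x →
      (∃ j, x = (Γ e).vtx j) ∧ bcc (Γ e) ψ b x = 2 ∧ ActiveV ends ψ b x := by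
    intro x hx
    have hx' : Relation.ReflTransGen
        (fun p q => ∃ e, ψ e = b ∧ p ∈ ends e ∧ q ∈ ends e) v₀ x := hx
    clear hx
    induction hx' with
    | refl =>
      obtain ⟨j, hj⟩ := mem_cell_of_mem_ends hpart hv₀e
      refine ⟨⟨j, hj⟩, ?_, hact₀⟩
      have hge : 1 ≤ bcc (Γ e) ψ b v₀ := by
        obtain ⟨i, hi⟩ := hpart.1 e
        exact bcc_pos (Γ e) (by rwa [hi]) (by rwa [hi])
      have hle : bcc (Γ e) ψ b v₀ ≤ 2 := by
        have h := bcc_le_cellDeg (Γ e) ψ b v₀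
        rw [hj] at h
        rw [cellDeg_vtx] at h
        rw [hj]
        exact h
      have hne1 : bcc (Γ e) ψ b v₀ ≠ 1 := by
        intro h1
        refine hnohalf v₀ (mem_Q_self hact₀) ⟨e, hv₀e, ?_⟩
        rw [hj] at h1 ⊢
        exact (halfOf_iff_bcc_one (Γ e) ψ b j).2 h1
      omega
    | @tail x' x hpath hstep ih =>
      obtain ⟨⟨j', hj'⟩, hb2, _⟩ := ih
      obtain ⟨e'', hc'', hx'm, hxm⟩ := hstep
      have hΓ : Γ e'' = Γ e := no_second_cell hpart hψ4 hdeg hb2 hj' hx'm hc''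
      have hxcell : ∃ j, x = (Γ e).vtx j := by
        have := mem_cell_of_mem_ends hpart hxm
        rwa [hΓ] at this
      obtain ⟨j, hj⟩ := hxcell
      have hvc : VConn ends ψ b v₀ x := hpath.tail ⟨e'', hc'', hx'm, hxm⟩
      have hactx : ActiveV ends ψ b x := ⟨e'', hc'', hxm⟩
      refine ⟨⟨j, hj⟩, ?_, hactx⟩
      have hge : 1 ≤ bcc (Γ e) ψ b x := by
        obtain ⟨i'', hi''⟩ := (fiber_eq hpart e e'').1 hΓ
        exact bcc_pos (Γ e) (by rwa [hi'']) (by rwa [hi''])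
      have hle : bcc (Γ e) ψ b x ≤ 2 := by
        have h := bcc_le_cellDeg (Γ e) ψ b x
        rw [hj] at h
        rw [cellDeg_vtx] at h
        rw [hj]
        exact h
      have hne1 : bcc (Γ e) ψ b x ≠ 1 := by
        intro h1
        refine hnohalf x ⟨hvc, hactx⟩ ⟨(Γ e).edge j, hj ▸ vtx_mem_ends (Γ e) j, ?_⟩
        rw [cell_edge_cellOf hpart e j, hj] at *
        exact (halfOf_iff_bcc_one (Γ e) ψ b j).2 h1
      omega
  obtain ⟨⟨j₀, hj₀⟩, hb20, _⟩ := claim1 v₀ Relation.ReflTransGen.refl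
  -- claim 2 : walking around the cell
  have claim2 : ∀ m : ℕ, ψ ((Γ e).edge (j₀ + (m : ZMod (Γ e).len))) = b ∧
      VConn ends ψ b v₀ ((Γ e).vtx (j₀ + (m : ZMod (Γ e).len))) := by
    intro m
    induction m with
    | zero =>
      constructor
      · have := (bcc_two_iff (Γ e) ψ b j₀).1 (hj₀ ▸ hb20)
        simpa using this.2
      · rw [Nat.cast_zero, add_zero, ← hj₀]
        exact Relation.ReflTransGen.refl
      -- end zero
    | succ m ihm =>
      obtain ⟨hcm, hvm⟩ := ihm
      have hstep : VConn ends ψ b v₀ ((Γ e).vtx (j₀ + (m : ZMod (Γ e).len) + 1)) :=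
        hvm.tail ⟨(Γ e).edge (j₀ + (m : ZMod (Γ e).len)), hcm,
          vtx_mem_ends (Γ e) _, vtx_succ_mem_ends (Γ e) _⟩
      have hcast : j₀ + ((m + 1 : ℕ) : ZMod (Γ e).len) = j₀ + (m : ZMod (Γ e).len) + 1 := by
        push_cast; ring
      have hb2x := (claim1 _ hstep).2.1
      have hnext : ψ ((Γ e).edge (j₀ + (m : ZMod (Γ e).len) + 1)) = b := by
        have h2 := (bcc_two_iff (Γ e) ψ b (j₀ + (m : ZMod (Γ e).len) + 1)).1 hb2x
        exact h2.2
      rw [hcast]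
      exact ⟨hnext, hstep⟩
  have hmono : ∀ i, ψ ((Γ e).edge i) = b := by
    intro i
    obtain ⟨d, _, rfl⟩ := zmod_enum (Γ e) i j₀
    exact (claim2 d).1
  refine ⟨e, hmono, ?_⟩
  ext x
  constructor
  · rintro ⟨hvc, _⟩
    obtain ⟨⟨j, hj⟩, _, _⟩ := claim1 x hvc
    exact ⟨j, hj.symm⟩
  · rintro ⟨i, rfl⟩
    obtain ⟨d, _, rfl⟩ := zmod_enum (Γ e) i j₀
    exact ⟨(claim2 d).2, (Γ e).edge (j₀ + (d : ZMod (Γ e).len)), (claim2 d).1,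
      vtx_mem_ends (Γ e) _⟩

/-- a monochromatic cell is not alternating. -/
lemma mono_not_alt {ψ : E → Bool} {e : E} {b : Bool}
    (hmono : ∀ i, ψ ((Γ e).edge i) = b) : ¬ altC (Γ e) ψ := by
  rintro ⟨_, halt⟩
  have h := halt 0
  rw [hmono 0, hmono (0 + 1)] at h
  exact h rfl

/-- K2: the flipped monochromatic cell is a component of `HG ψ` of colour `!b`. -/
lemma internal_transfer (hpart : IsCyclePartition ends Γ)
    {ψ : E → Bool} (hψ4H : ∀ v, degG ends v = 4 → bdegG ends (HG ends Γ ψ) v = 2)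
    (hdeg : ∀ v, degG ends v = 4 ∨ degG ends v = 2)
    {e : E} {b : Bool} (hmono : ∀ i, ψ ((Γ e).edge i) = b) :
    (∀ i, HG ends Γ ψ ((Γ e).edge i) = !b) ∧
    ∀ j, Q ends (HG ends Γ ψ) (!b) ((Γ e).vtx j) = Set.range (Γ e).vtx := by
  have hflip : ¬ altC (Γ e) ψ := mono_not_alt hmono
  have hmono' : ∀ i, HG ends Γ ψ ((Γ e).edge i) = !b := fun i => by
    rw [HG_cell_flip hpart hflip i, hmono i]
  refine ⟨hmono', fun j => ?_⟩
  have hb2 : ∀ k, bcc (Γ e) (HG ends Γ ψ) (!b) ((Γ e).vtx k) = 2 := fun k =>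
    (bcc_two_iff (Γ e) (HG ends Γ ψ) (!b) k).2 ⟨hmono' _, hmono' _⟩
  -- membership stays in the cell
  have hstay : ∀ x, VConn ends (HG ends Γ ψ) (!b) ((Γ e).vtx j) x →
      ∃ k, x = (Γ e).vtx k := by
    intro x hx
    have hx' : Relation.ReflTransGen
        (fun p q => ∃ e', HG ends Γ ψ e' = !b ∧ p ∈ ends e' ∧ q ∈ ends e') _ x := hx
    clear hx
    induction hx' with
    | refl => exact ⟨j, rfl⟩
    | @tail x' x hpath hstep ih =>
      obtain ⟨k', hk'⟩ := ih
      obtain ⟨e'', hc'', hx'm, hxm⟩ := hstep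
      have hb2' : bcc (Γ e) (HG ends Γ ψ) (!b) x' = 2 := by rw [hk']; exact hb2 k'
      have hΓ : Γ e'' = Γ e :=
        no_second_cell hpart hψ4H hdeg hb2' hk' hx'm hc''
      have := mem_cell_of_mem_ends hpart hxm
      rwa [hΓ] at this
  -- walking around the cell
  have hwalk : ∀ m : ℕ, VConn ends (HG ends Γ ψ) (!b) ((Γ e).vtx j)
      ((Γ e).vtx (j + (m : ZMod (Γ e).len))) := by
    intro m
    induction m with
    | zero => simpa using (id Relation.ReflTransGen.refl :
        VConn ends (HG ends Γ ψ) (!b) ((Γ e).vtx j) ((Γ e).vtx j))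
    | succ m ihm =>
      have hcast : j + ((m + 1 : ℕ) : ZMod (Γ e).len) = j + (m : ZMod (Γ e).len) + 1 := by
        push_cast; ring
      rw [hcast]
      exact ihm.tail ⟨(Γ e).edge (j + (m : ZMod (Γ e).len)), hmono' _,
        vtx_mem_ends (Γ e) _, vtx_succ_mem_ends (Γ e) _⟩
  ext x
  constructor
  · rintro ⟨hvc, _⟩
    obtain ⟨k, hk⟩ := hstay x hvc
    exact ⟨k, hk.symm⟩
  · rintro ⟨i, rfl⟩
    obtain ⟨d, _, rfl⟩ := zmod_enum (Γ e) i j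
    exact ⟨hwalk d, (Γ e).edge (j + (d : ZMod (Γ e).len)), hmono' _,
      vtx_mem_ends (Γ e) _⟩

end Gyr

namespace Gyr
set_option linter.unusedSectionVars false
variable {V E : Type} [Fintype V] [Fintype E] {ends : E → Sym2 V}
  {Γ : E → CycleIn V E ends}

/-- the collection of `b`-coloured components avoiding `V''(τ)`. -/
def AS (ends : E → Sym2 V) (τ ψ : E → Bool) (b : Bool) : Set (Set V) :=
  {C | (∃ v, ActiveV ends ψ b v ∧ C = Q ends ψ b v) ∧ ∀ w ∈ C, ¬ Vpp ends τ w}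

def PSet (ends : E → Sym2 V) (τ ψ : E → Bool) : Set (Bool × Set V) :=
  {p | p.2 ∈ AS ends τ ψ p.1}

noncomputable def Fmap (ends : E → Sym2 V) (Γ : E → CycleIn V E ends)
    (ψ : E → Bool) : Bool × Set V → Bool × Set V := fun p =>
  if h : ∃ v ∈ p.2, HalfV Γ ψ v then (p.1, Q ends (HG ends Γ ψ) p.1 h.choose)
  else (!p.1, p.2)

section engine
variable {τ ψ : E → Bool}
  (hpart : IsCyclePartition ends Γ)
  (hlen : ∀ e, (Γ e).len ≤ 4)
  (hdeg : ∀ v, degG ends v = 4 ∨ degG ends v = 2)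
  (hψ4 : ∀ v, degG ends v = 4 → bdegG ends ψ v = 2)
  (hψ4H : ∀ v, degG ends v = 4 → bdegG ends (HG ends Γ ψ) v = 2)
  (hVh : ∀ w, Vpp ends τ w → HalfV Γ ψ w)

include hpart hlen hdeg hψ4 hψ4H hVh in
lemma Fmap_mapsTo :
    Set.MapsTo (Fmap ends Γ ψ) (PSet ends τ ψ) (PSet ends τ (HG ends Γ ψ)) := by
  rintro ⟨b, C⟩ ⟨⟨v₀, hv₀, hQ⟩, hgood⟩
  by_cases h : ∃ v ∈ (b, C).2, HalfV Γ ψ v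
  · obtain ⟨hmem, hhalf⟩ := h.choose_spec
    unfold Fmap
    rw [dif_pos h]
    refine ⟨⟨h.choose, active_HG_of_half hpart hhalf b, rfl⟩, ?_⟩
    intro w hw hvpp
    have hwhalf : HalfV Γ ψ w := hVh w hvpp
    have hvc : VConn ends ψ b h.choose w :=
      (vconn_HG_iff hpart hlen hψ4 hψ4H hdeg hhalf hwhalf b).2 hw.1
    have hvch : VConn ends ψ b v₀ h.choose := (hQ ▸ hmem : _ ∈ Q ends ψ b v₀).1
    refine hgood w ?_ hvpp
    rw [hQ, Q_eq hvch]
    exact ⟨hvc, active_of_half hpart hwhalf b⟩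
  · unfold Fmap
    rw [dif_neg h]
    push_neg at h
    have hnohalf : ∀ w ∈ Q ends ψ b v₀, ¬ HalfV Γ ψ w := by
      intro w hw
      exact h w (by rw [hQ]; exact hw)
    obtain ⟨e, hmono, hQrange⟩ := internal_cell hpart hψ4 hdeg hv₀ hnohalf
    obtain ⟨hmono', hQ'⟩ := internal_transfer hpart hψ4H hdeg hmono
    refine ⟨⟨(Γ e).vtx 0, ⟨(Γ e).edge 0, hmono' 0, vtx_mem_ends (Γ e) 0⟩, ?_⟩, hgood⟩
    rw [hQ' 0, ← hQrange, ← hQ]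

include hpart hlen hdeg hψ4 hψ4H hVh in
lemma Fmap_roundtrip : ∀ p ∈ PSet ends τ ψ,
    Fmap ends Γ (HG ends Γ ψ) (Fmap ends Γ ψ p) = p := by
  rintro ⟨b, C⟩ ⟨⟨v₀, hv₀, hQ⟩, hgood⟩
  by_cases h : ∃ v ∈ (b, C).2, HalfV Γ ψ v
  · obtain ⟨hmem, hhalf⟩ := h.choose_spec
    unfold Fmap
    rw [dif_pos h]
    have hacth : ActiveV ends (HG ends Γ ψ) b h.choose :=
      active_HG_of_half hpart hhalf b
    have h2 : ∃ v ∈ (b, Q ends (HG ends Γ ψ) b h.choose).2, HalfV Γ (HG ends Γ ψ) v :=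
      ⟨h.choose, mem_Q_self hacth, (HalfV_HG hpart ψ h.choose).2 hhalf⟩
    rw [dif_pos h2]
    obtain ⟨hmem2, hhalf2⟩ := h2.choose_spec
    have hinv := HG_invol hpart ψ
    have hψ4HH : ∀ v, degG ends v = 4 →
        bdegG ends (HG ends Γ (HG ends Γ ψ)) v = 2 := by
      rw [hinv]; exact hψ4
    have hhalfH : HalfV Γ (HG ends Γ ψ) h.choose := (HalfV_HG hpart ψ h.choose).2 hhalf
    -- transfer the connectivity back
    have hvcH : VConn ends (HG ends Γ ψ) b h.choose h2.choose := hmem2.1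
    have hvc : VConn ends ψ b h.choose h2.choose := by
      have := (vconn_HG_iff hpart hlen hψ4H hψ4HH hdeg hhalfH hhalf2 b).1 hvcH
      rwa [hinv] at this
    have hQeq : Q ends (HG ends Γ (HG ends Γ ψ)) b h2.choose = C := by
      rw [hinv, ← Q_eq hvc, ← Q_eq ((hQ ▸ hmem : _ ∈ Q ends ψ b v₀).1), ← hQ]
    rw [hQeq]
  · unfold Fmap
    rw [dif_neg h]
    have h2 : ¬ ∃ v ∈ ((!b, C) : Bool × Set V).2, HalfV Γ (HG ends Γ ψ) v := by
      rintro ⟨v, hv, hh⟩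
      exact h ⟨v, hv, (HalfV_HG hpart ψ v).1 hh⟩
    rw [dif_neg h2, Bool.not_not]

end engine

lemma AS_finite [Fintype V] (τ ψ : E → Bool) (b : Bool) : (AS ends τ ψ b).Finite :=
  Set.Finite.subset (Set.finite_range (Q ends ψ b))
    (by rintro C ⟨⟨v, _, rfl⟩, _⟩; exact ⟨v, rfl⟩)

lemma PSet_ncard (τ ψ : E → Bool) :
    (PSet ends τ ψ).ncard = (AS ends τ ψ true).ncard + (AS ends τ ψ false).ncard := by
  classical
  have hset : PSet ends τ ψ
      = (Prod.mk true '' AS ends τ ψ true) ∪ (Prod.mk false '' AS ends τ ψ false) := by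
    ext ⟨b, C⟩
    cases b <;> simp [PSet, Set.mem_image, Prod.ext_iff]
  have hinj : ∀ b : Bool, Function.Injective (Prod.mk b : Set V → Bool × Set V) :=
    fun b x y h => congrArg Prod.snd h
  rw [hset, Set.ncard_union_eq ?_ ((AS_finite τ ψ true).image _)
      ((AS_finite τ ψ false).image _),
    Set.ncard_image_of_injective _ (hinj true),
    Set.ncard_image_of_injective _ (hinj false)]
  rw [Set.disjoint_left]
  rintro ⟨b, C⟩ ⟨D, _, hD⟩ ⟨D', _, hD'⟩
  have h1 : true = b := congrArg Prod.fst hD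
  have h2 : false = b := congrArg Prod.fst hD'
  exact absurd (h1.trans h2.symm) (by decide)

/-- the master counting lemma. -/
lemma PSet_ncard_eq {τ ψ : E → Bool}
    (hpart : IsCyclePartition ends Γ)
    (hlen : ∀ e, (Γ e).len ≤ 4)
    (hdeg : ∀ v, degG ends v = 4 ∨ degG ends v = 2)
    (hψ4 : ∀ v, degG ends v = 4 → bdegG ends ψ v = 2)
    (hψ4H : ∀ v, degG ends v = 4 → bdegG ends (HG ends Γ ψ) v = 2)
    (hVh : ∀ w, Vpp ends τ w → HalfV Γ ψ w) :
    (PSet ends τ (HG ends Γ ψ)).ncard = (PSet ends τ ψ).ncard := by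
  have hinv := HG_invol hpart ψ
  have hψ4HH : ∀ v, degG ends v = 4 →
      bdegG ends (HG ends Γ (HG ends Γ ψ)) v = 2 := by rw [hinv]; exact hψ4
  have hVhH : ∀ w, Vpp ends τ w → HalfV Γ (HG ends Γ ψ) w :=
    fun w h => (HalfV_HG hpart ψ w).2 (hVh w h)
  have hmt1 := Fmap_mapsTo (τ := τ) hpart hlen hdeg hψ4 hψ4H hVh
  have hmt2 := Fmap_mapsTo (τ := τ) (ψ := HG ends Γ ψ) hpart hlen hdeg hψ4H hψ4HH hVhH
  rw [hinv] at hmt2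
  have hrt1 := Fmap_roundtrip (τ := τ) hpart hlen hdeg hψ4 hψ4H hVh
  have hrt2 := Fmap_roundtrip (τ := τ) (ψ := HG ends Γ ψ) hpart hlen hdeg hψ4H hψ4HH hVhH
  rw [hinv] at hrt2
  have hbij : Set.BijOn (Fmap ends Γ ψ) (PSet ends τ ψ) (PSet ends τ (HG ends Γ ψ)) :=
    Set.InvOn.bijOn ⟨hrt1, hrt2⟩ hmt1 hmt2
  rw [← hbij.image_eq, Set.ncard_image_of_injOn hbij.injOn]

end Gyr

namespace Gyr
set_option linter.unusedSectionVars false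
variable {V E : Type} [Fintype V] [Fintype E] {ends : E → Sym2 V}
  {Γ : E → CycleIn V E ends}

lemma vpp_half (hpart : IsCyclePartition ends Γ) {ψ τ : E → Bool}
    (hb : ∀ e (v' : V), v' ∈ ends e → degG ends v' = 2 → ψ e = τ e)
    {w : V} (hw : Vpp ends τ w) : HalfV Γ ψ w := by
  obtain ⟨hd2, hb1⟩ := hw
  have hex : ∃ e, w ∈ ends e := by
    by_contra hc
    push_neg at hc
    have h0 : degG ends w = 0 := Finset.sum_eq_zero fun e _ => incG_eq_zero (hc e)
    omega
  obtain ⟨e, he⟩ := hex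
  have hbψ : bdeg' ends ψ true w = 1 := by
    rw [bdeg'_eq_of_agree (fun e' he' => hb e' w he' hd2) true, ← bdegG_eq_bdeg']
    exact hb1
  have hbcc : bcc (Γ e) ψ true w = 1 := by
    rw [← bdeg'_deg_two hpart hd2 he ψ true]
    exact hbψ
  obtain ⟨j, hj⟩ := mem_cell_of_mem_ends hpart he
  refine ⟨e, he, ?_⟩
  rw [hj] at hbcc ⊢
  exact (halfOf_iff_bcc_one _ ψ true j).2 hbcc

lemma cycCount_eq_AS (τ' ψ : E → Bool) (b : Bool) :
    cycCount ends τ' ψ b = (AS ends τ' ψ b).ncard := rfl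

lemma AS_not (τ ψ : E → Bool) (b : Bool) :
    AS ends (fun e => !(τ e)) ψ b = AS ends τ ψ b := by
  ext C
  unfold AS
  constructor <;> rintro ⟨h1, h2⟩ <;> refine ⟨h1, fun w hw hvpp => h2 w hw ?_⟩
  · exact (Vpp_not_iff τ w).2 hvpp
  · exact (Vpp_not_iff τ w).1 hvpp

lemma valid_not (hvalid : ValidTriplet ends τ Γ) :
    ValidTriplet ends (fun e => !(τ e)) Γ :=
  ⟨hvalid.1, hvalid.2.1,
    fun e ⟨i, hi⟩ => hvalid.2.2 e ⟨i, (Vpp_not_iff τ _).1 hi⟩⟩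

end Gyr

/-- **Gyration preserves refined link-pattern data.**  For a valid triplet
`(𝒢, τ, Γ)` and `φ ∈ Fpl(𝒢,τ)`: `H_Γ(φ) ∈ Fpl(𝒢,τ̄)`; the black and white
connectivity between vertices of `V''(τ)` (i.e. `π_b` and `π_w`) is preserved; the
number of monochromatic closed cycles `ℓ` is preserved; and `H_Γ` is an involution,
hence a bijection from `Fpl(𝒢,τ)` onto `Fpl(𝒢,τ̄)`. -/
theorem gyration_preserves_link_data
    (V E : Type) [Fintype V] [Fintype E] [DecidableEq V] [DecidableEq E]
    (ends : E → Sym2 V)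
    (hdeg : ∀ v, degG ends v = 4 ∨ degG ends v = 2)
    (τ : E → Bool) (Γ : E → CycleIn V E ends)
    (hvalid : ValidTriplet ends τ Γ)
    (φ : E → Bool) (hφ : IsFplG ends τ φ) :
    IsFplG ends (fun e => !(τ e)) (HG ends Γ φ) ∧
    (∀ u w, Vpp ends τ u → Vpp ends τ w →
      ((VConn ends φ true u w ↔ VConn ends (HG ends Γ φ) true u w) ∧
       (VConn ends φ false u w ↔ VConn ends (HG ends Γ φ) false u w))) ∧
    (cycCount ends (fun e => !(τ e)) (HG ends Γ φ) true
        + cycCount ends (fun e => !(τ e)) (HG ends Γ φ) false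
      = cycCount ends τ φ true + cycCount ends τ φ false) ∧
    (∀ ψ, IsFplG ends τ ψ → HG ends Γ (HG ends Γ ψ) = ψ) ∧
    Set.BijOn (HG ends Γ) {ψ | IsFplG ends τ ψ} {ψ | IsFplG ends (fun e => !(τ e)) ψ} := by
  obtain ⟨hpart, hlen, hvpp3⟩ := hvalid
  have hvalid : ValidTriplet ends τ Γ := ⟨hpart, hlen, hvpp3⟩
  have hfpl : IsFplG ends (fun e => !(τ e)) (HG ends Γ φ) :=
    Gyr.isFpl_HG hpart hvalid hφ
  have hψ4 : ∀ v, degG ends v = 4 → bdegG ends φ v = 2 := hφ.2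
  have hψ4H : ∀ v, degG ends v = 4 → bdegG ends (HG ends Γ φ) v = 2 := hfpl.2
  have hVh : ∀ w, Vpp ends τ w → Gyr.HalfV Γ φ w :=
    fun w hw => Gyr.vpp_half hpart hφ.1 hw
  refine ⟨hfpl, ?_, ?_, fun ψ _ => Gyr.HG_invol hpart ψ, ?_⟩
  · -- link pattern preservation
    intro u w hu hw
    exact ⟨Gyr.vconn_HG_iff hpart hlen hψ4 hψ4H hdeg (hVh u hu) (hVh w hw) true,
      Gyr.vconn_HG_iff hpart hlen hψ4 hψ4H hdeg (hVh u hu) (hVh w hw) false⟩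
  · -- cycle count
    rw [Gyr.cycCount_eq_AS, Gyr.cycCount_eq_AS, Gyr.cycCount_eq_AS, Gyr.cycCount_eq_AS,
      Gyr.AS_not, Gyr.AS_not, ← Gyr.PSet_ncard, ← Gyr.PSet_ncard]
    exact Gyr.PSet_ncard_eq hpart hlen hdeg hψ4 hψ4H hVh
  · -- bijection
    refine ⟨fun ψ hψ => Gyr.isFpl_HG hpart hvalid hψ, ?_, ?_⟩
    · intro ψ1 _ ψ2 _ heq
      rw [← Gyr.HG_invol hpart ψ1, heq, Gyr.HG_invol hpart ψ2]
    · intro ψ' hψ'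
      refine ⟨HG ends Γ ψ', ?_, Gyr.HG_invol hpart ψ'⟩
      have h1 : IsFplG ends (fun e => !(!(τ e))) (HG ends Γ ψ') :=
        Gyr.isFpl_HG hpart (Gyr.valid_not hvalid) hψ'
      have h2 : (fun e => !(!(τ e))) = τ := funext fun e => Bool.not_not _
      rw [h2] at h1
      exact h1
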